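/- arXiv:2103.07737 — 6 statements merged into one kernel-verified Lean document; each statement's English description precedes it below -/
import Mathlib

section
/- Let σ be a 2-structure and let X ⊊ V(σ) be such that σ[X] is prime, with X̄ = V(σ)∖X. Then the family p_{(σ,X̄)} = {Ext_σ(X), ⟨X⟩_σ} ∪ {X_σ(α) : α ∈ X} is a partition of X̄ (its members are pairwise disjoint and their union is X̄). Moreover: (1) for v ∈ ⟨X⟩_σ and w ∈ X̄∖⟨X⟩_σ, if σ[X∪{v,w}] is not prime, then X∪{w} is a module of σ[X∪{v,w}]; (2) for α ∈ X, v ∈ X_σ(α) and w ∈ X̄∖X_σ(α), if σ[X∪{v,w}] is not prime, then {α,v} is a module of σ[X∪{v,w}]; (3) for distinct v, w ∈ Ext_σ(X), if σ[X∪{v,w}] is not prime, then {v,w} is a module of σ[X∪{v,w}]. -/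
/-!
Formalization of 2-structures (Ehrenfeucht et al.), modules, primality,
criticality, the outside partition/graph, and (discrete) half graphs.
-/

universe u

variable {V : Type u}

/-- A 2-structure on the vertex type `V`: an equivalence relation on ordered
pairs of (distinct) vertices.  Only its values on off-diagonal pairs matter. -/
structure TwoStructure (V : Type u) where
  rel : V × V → V × V → Prop
  refl : ∀ p : V × V, p.1 ≠ p.2 → rel p p
  symm : ∀ {p q : V × V}, rel p q → rel q p
  trans : ∀ {p q r : V × V}, rel p q → rel q r → rel p r

namespace TwoStructure

variable (σ : TwoStructure V)

/-- `M` is a module of the induced substructure `σ[W]`. -/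
def IsModuleOn (W M : Set V) : Prop :=
  M ⊆ W ∧ ∀ x ∈ M, ∀ y ∈ M, ∀ v ∈ W \ M,
    σ.rel (x, v) (y, v) ∧ σ.rel (v, x) (v, y)

/-- The induced substructure `σ[W]` is prime: it has at least 3 vertices and
all of its modules are trivial. -/
def IsPrimeOn (W : Set V) : Prop :=
  3 ≤ W.encard ∧ ∀ M : Set V, σ.IsModuleOn W M → M = ∅ ∨ M = W ∨ ∃ v, M = {v}

/-- The induced substructure `σ[W]` is `S`-critical: it is prime and removing
any vertex of `S` destroys primality. -/
def IsCriticalOn (W S : Set V) : Prop :=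
  σ.IsPrimeOn W ∧ ∀ v ∈ S, ¬ σ.IsPrimeOn (W \ {v})

/-- `Ext_σ(X)`: the vertices `v ∉ X` with `σ[X ∪ {v}]` prime. -/
def extSet (X : Set V) : Set V := {v | v ∉ X ∧ σ.IsPrimeOn (X ∪ {v})}

/-- `⟨X⟩_σ`: the vertices `v ∉ X` such that `X` is a module of `σ[X ∪ {v}]`. -/
def innSet (X : Set V) : Set V := {v | v ∉ X ∧ σ.IsModuleOn (X ∪ {v}) X}

/-- `X_σ(α)`: the vertices `v ∉ X` such that `{α, v}` is a module of `σ[X ∪ {v}]`. -/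
def attSet (X : Set V) (α : V) : Set V :=
  {v | v ∉ X ∧ σ.IsModuleOn (X ∪ {v}) {α, v}}

/-- The outside partition `p_{(σ, X̄)}`. -/
def pBlocks (X : Set V) : Set (Set V) :=
  {σ.extSet X, σ.innSet X} ∪ (fun α => σ.attSet X α) '' X

/-- `⟨X⟩_σ^{(e,f)}` where the classes `e` and `f` are given by representative
pairs: vertices `v ∈ ⟨X⟩_σ` with `(v,α) ≡_σ e` and `(α,v) ≡_σ f` for all `α ∈ X`. -/
def innSetC (X : Set V) (e f : V × V) : Set V :=
  {v | v ∈ σ.innSet X ∧ ∀ α ∈ X, σ.rel (v, α) e ∧ σ.rel (α, v) f}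

/-- `X_σ^{(e,f)}(α)` where the classes `e` and `f` are given by representative
pairs. -/
def attSetC (X : Set V) (α : V) (e f : V × V) : Set V :=
  {v | v ∈ σ.attSet X α ∧ σ.rel (v, α) e ∧ σ.rel (α, v) f}

/-- The refined outside partition `q_{(σ, X̄)}`. -/
def qBlocks (X : Set V) : Set (Set V) :=
  {σ.extSet X} ∪ {B | ∃ e f : V × V, B = σ.innSetC X e f}
    ∪ {B | ∃ α ∈ X, ∃ e f : V × V, B = σ.attSetC X α e f}

/-- `q^a`: the blocks of `q_{(σ, X̄)}` other than `Ext_σ(X)` that are not of the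
symmetric form `⟨X⟩_σ^{(e,e)}` or `X_σ^{(e,e)}(α)`. -/
def qaBlocks (X : Set V) : Set (Set V) :=
  {B | B ∈ σ.qBlocks X ∧ B ≠ σ.extSet X ∧
    ¬ ∃ e : V × V, B = σ.innSetC X e e ∨ ∃ α ∈ X, B = σ.attSetC X α e e}

/-- The outside graph `Γ_{(σ, X̄)}`: on the vertex set `X̄ = Xᶜ`, two distinct
vertices `v, w` are adjacent when `σ[X ∪ {v, w}]` is prime.  (Vertices of `X`
are not incident to any edge.) -/
def outsideGraph (X : Set V) : SimpleGraph V where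
  Adj v w := v ∉ X ∧ w ∉ X ∧ v ≠ w ∧ σ.IsPrimeOn (X ∪ {v, w})
  symm := by
    constructor
    rintro v w ⟨hv, hw, hvw, hp⟩
    refine ⟨hw, hv, hvw.symm, ?_⟩
    rwa [Set.pair_comm w v]
  loopless := by
    constructor
    rintro v ⟨-, -, h, -⟩
    exact h rfl

/-- `C` is (the vertex set of) a connected component of the outside graph
`Γ_{(σ, X̄)}` (a component of the graph induced on `X̄`). -/
def IsComponent (X : Set V) (C : Set V) : Prop :=
  ∃ v, v ∉ X ∧ C = {w | (σ.outsideGraph X).Reachable v w}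

end TwoStructure

/-- `M` is a module of the subgraph of `G` induced on `W`. -/
def GraphIsModuleOn (G : SimpleGraph V) (W M : Set V) : Prop :=
  M ⊆ W ∧ ∀ v ∈ W \ M, (∀ x ∈ M, G.Adj v x) ∨ (∀ x ∈ M, ¬ G.Adj v x)

/-- The subgraph of `G` induced on `W` is prime. -/
def GraphIsPrimeOn (G : SimpleGraph V) (W : Set V) : Prop :=
  3 ≤ W.encard ∧ ∀ M : Set V, GraphIsModuleOn G W M → M = ∅ ∨ M = W ∨ ∃ v, M = {v}

/-- The subgraph of `G` induced on `W` is critical: prime, and removing any of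
its vertices destroys primality. -/
def GraphIsCriticalOn (G : SimpleGraph V) (W : Set V) : Prop :=
  GraphIsPrimeOn G W ∧ ∀ v ∈ W, ¬ GraphIsPrimeOn G (W \ {v})

/-- The subgraph of `G` induced on `S` contains an induced path `P₅` on five
vertices. -/
def HasInducedP5On (G : SimpleGraph V) (S : Set V) : Prop :=
  ∃ a b c d e : V, a ∈ S ∧ b ∈ S ∧ c ∈ S ∧ d ∈ S ∧ e ∈ S ∧
    a ≠ b ∧ a ≠ c ∧ a ≠ d ∧ a ≠ e ∧ b ≠ c ∧ b ≠ d ∧ b ≠ e ∧ c ≠ d ∧ c ≠ e ∧ d ≠ e ∧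
    G.Adj a b ∧ G.Adj b c ∧ G.Adj c d ∧ G.Adj d e ∧
    ¬ G.Adj a c ∧ ¬ G.Adj a d ∧ ¬ G.Adj a e ∧ ¬ G.Adj b d ∧ ¬ G.Adj b e ∧ ¬ G.Adj c e

/-- `r` is a linear order on the set `X`. -/
def IsLinearOrderOn (X : Set V) (r : V → V → Prop) : Prop :=
  (∀ x ∈ X, r x x) ∧
  (∀ x ∈ X, ∀ y ∈ X, r x y → r y x → x = y) ∧
  (∀ x ∈ X, ∀ y ∈ X, ∀ z ∈ X, r x y → r y z → r x z) ∧
  (∀ x ∈ X, ∀ y ∈ X, r x y ∨ r y x)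

/-- The linear order `r` on `X` is discrete: every element other than the
minimum has an immediate predecessor, and every element other than the maximum
has an immediate successor. -/
def IsDiscreteOn (X : Set V) (r : V → V → Prop) : Prop :=
  (∀ x ∈ X, ¬ (∀ y ∈ X, r x y) →
    ∃ p ∈ X, p ≠ x ∧ r p x ∧ ∀ z ∈ X, r p z → r z x → z = p ∨ z = x) ∧
  (∀ x ∈ X, ¬ (∀ y ∈ X, r y x) →
    ∃ s ∈ X, s ≠ x ∧ r x s ∧ ∀ z ∈ X, r x z → r z s → z = x ∨ z = s)

/-- `G` is the half graph determined by the bipartition `{X, Y}` of its vertex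
set, the linear order `r` on `X`, and the bijection `φ : X → Y`: the edges of
`G` are exactly the pairs `{x, φ x'}` with `x ≤ x'` in `r`. -/
def IsHalfGraphWith (G : SimpleGraph V) (X Y : Set V) (r : V → V → Prop)
    (φ : V → V) : Prop :=
  Disjoint X Y ∧ X ∪ Y = Set.univ ∧ IsLinearOrderOn X r ∧ Set.BijOn φ X Y ∧
    ∀ u v : V, G.Adj u v ↔ ∃ x ∈ X, ∃ x' ∈ X, r x x' ∧
      ((u = x ∧ v = φ x') ∨ (v = x ∧ u = φ x'))

/-- `G` is a half graph. -/
def IsHalfGraph (G : SimpleGraph V) : Prop :=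
  ∃ (X Y : Set V) (r : V → V → Prop) (φ : V → V), IsHalfGraphWith G X Y r φ

/-- `G` is a discrete half graph: a half graph whose defining linear order is
discrete. -/
def IsDiscreteHalfGraph (G : SimpleGraph V) : Prop :=
  ∃ (X Y : Set V) (r : V → V → Prop) (φ : V → V),
    IsHalfGraphWith G X Y r φ ∧ IsDiscreteOn X r

/-- `G` is bipartite: its vertex set splits into two independent sets. -/
def IsBipartite (G : SimpleGraph V) : Prop :=
  ∃ X Y : Set V, Disjoint X Y ∧ X ∪ Y = Set.univ ∧
    (∀ u ∈ X, ∀ v ∈ X, ¬ G.Adj u v) ∧ (∀ u ∈ Y, ∀ v ∈ Y, ¬ G.Adj u v)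

section AuxLemmas

lemma mem_pair_elim' {x a b : V} (h : x ∈ ({a, b} : Set V)) : x = a ∨ x = b := h
lemma mem_triple_elim' {x a b c : V} (h : x ∈ ({a, b, c} : Set V)) :
    x = a ∨ x = b ∨ x = c := h
lemma mem_single_elim' {x a : V} (h : x ∈ ({a} : Set V)) : x = a := h

lemma encard3_ne_empty {X : Set V} (h3 : 3 ≤ X.encard) : X ≠ ∅ := by
  rintro rfl; simp at h3

lemma encard3_ne_singleton {X : Set V} (h3 : 3 ≤ X.encard) (a : V) : X ≠ {a} := by
  rintro rfl; simp at h3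

lemma encard3_not_subset_pair {X : Set V} (h3 : 3 ≤ X.encard) (a b : V) :
    ¬ X ⊆ {a, b} := by
  intro hsub
  have h := h3.trans (Set.encard_mono hsub)
  have h2 : ({a, b} : Set V).encard ≤ 2 := by
    calc (insert a {b} : Set V).encard ≤ ({b} : Set V).encard + 1 :=
          Set.encard_insert_le _ _
      _ = 2 := by rw [Set.encard_singleton, one_add_one_eq_two]
  exact absurd (h.trans h2) (by norm_num)

namespace TwoStructure

variable {σ : TwoStructure V}

lemma restrictMod {W W' M : Set V} (h : σ.IsModuleOn W M) (hW' : W' ⊆ W) :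
    σ.IsModuleOn W' (M ∩ W') := by
  refine ⟨Set.inter_subset_right, fun x hx y hy u hu => ?_⟩
  exact h.2 x hx.1 y hy.1 u ⟨hW' hu.1, fun hm => hu.2 ⟨hm, hu.1⟩⟩

lemma modOfRep {W M : Set V} (hMW : M ⊆ W) {m₀ : V} (hm₀ : m₀ ∈ M)
    (h : ∀ x ∈ M, ∀ u ∈ W \ M, σ.rel (x, u) (m₀, u) ∧ σ.rel (u, x) (u, m₀)) :
    σ.IsModuleOn W M := by
  refine ⟨hMW, fun x hx y hy u hu => ?_⟩
  obtain ⟨h1, h2⟩ := h x hx u hu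
  obtain ⟨h3, h4⟩ := h y hy u hu
  exact ⟨σ.trans h1 (σ.symm h3), σ.trans h2 (σ.symm h4)⟩

lemma inn_att_false {X : Set V} (hXp : σ.IsPrimeOn X) {v α : V} (hv : v ∉ X)
    (hα : α ∈ X) (hinn : σ.IsModuleOn (X ∪ {v}) X)
    (hatt : σ.IsModuleOn (X ∪ {v}) {α, v}) : False := by
  have h3 := hXp.1
  have hmod : σ.IsModuleOn X (X \ {α}) := by
    refine ⟨Set.diff_subset, fun x hx y hy u hu => ?_⟩
    have hu' : u = α := by
      by_contra h; exact hu.2 ⟨hu.1, h⟩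
    subst u
    have hxo : x ∈ (X ∪ {v}) \ ({α, v} : Set V) := by
      refine ⟨Or.inl hx.1, fun h => ?_⟩
      rcases mem_pair_elim' h with rfl | rfl
      · exact hx.2 rfl
      · exact hv hx.1
    have hyo : y ∈ (X ∪ {v}) \ ({α, v} : Set V) := by
      refine ⟨Or.inl hy.1, fun h => ?_⟩
      rcases mem_pair_elim' h with rfl | rfl
      · exact hy.2 rfl
      · exact hv hy.1
    obtain ⟨ax1, ax2⟩ := hatt.2 α (Or.inl rfl) v (Or.inr rfl) x hxo
    obtain ⟨ay1, ay2⟩ := hatt.2 α (Or.inl rfl) v (Or.inr rfl) y hyo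
    obtain ⟨i1, i2⟩ := hinn.2 x hx.1 y hy.1 v ⟨Or.inr rfl, hv⟩
    exact ⟨σ.trans ax2 (σ.trans i1 (σ.symm ay2)),
           σ.trans ax1 (σ.trans i2 (σ.symm ay1))⟩
  have hcard := Set.encard_diff_singleton_add_one hα
  rcases hXp.2 _ hmod with h | h | ⟨b, h⟩
  · rw [h, Set.encard_empty, zero_add] at hcard
    rw [← hcard] at h3; exact absurd h3 (by norm_num)
  · have : α ∈ X \ {α} := h.symm ▸ hα
    exact this.2 rfl
  · rw [h, Set.encard_singleton, one_add_one_eq_two] at hcard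
    rw [← hcard] at h3; exact absurd h3 (by norm_num)

lemma att_att_false {X : Set V} (hXp : σ.IsPrimeOn X) {v α β : V} (hv : v ∉ X)
    (hα : α ∈ X) (hβ : β ∈ X) (hαβ : α ≠ β)
    (h1 : σ.IsModuleOn (X ∪ {v}) {α, v}) (h2 : σ.IsModuleOn (X ∪ {v}) {β, v}) :
    False := by
  have h3 := hXp.1
  have hmod : σ.IsModuleOn X {α, β} := by
    refine modOfRep (by rintro x hx; rcases mem_pair_elim' hx with rfl | rfl <;>
      assumption) (Or.inl rfl : α ∈ ({α, β} : Set V)) ?_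
    rintro x hx u ⟨huX, hun⟩
    have huα : u ≠ α := fun h => hun (Or.inl h)
    have huβ : u ≠ β := fun h => hun (Or.inr h)
    rcases mem_pair_elim' hx with hxe | hxe
    · subst x
      exact ⟨σ.refl _ huα.symm, σ.refl _ huα⟩
    · subst x
      have hu1 : u ∈ (X ∪ {v}) \ ({α, v} : Set V) :=
        ⟨Or.inl huX, fun h => by
          rcases mem_pair_elim' h with rfl | rfl
          exacts [huα rfl, hv huX]⟩
      have hu2 : u ∈ (X ∪ {v}) \ ({β, v} : Set V) :=
        ⟨Or.inl huX, fun h => by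
          rcases mem_pair_elim' h with rfl | rfl
          exacts [huβ rfl, hv huX]⟩
      obtain ⟨b1, b2⟩ := h2.2 β (Or.inl rfl) v (Or.inr rfl) u hu2
      obtain ⟨a1, a2⟩ := h1.2 α (Or.inl rfl) v (Or.inr rfl) u hu1
      exact ⟨σ.trans b1 (σ.symm a1), σ.trans b2 (σ.symm a2)⟩
  rcases hXp.2 _ hmod with h | h | ⟨b, h⟩
  · exact absurd h (Set.insert_nonempty _ _).ne_empty
  · exact encard3_not_subset_pair h3 α β (by rw [h])
  · have hαb : α = b := by
      have : α ∈ ({b} : Set V) := by rw [← h]; exact Or.inl rfl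
      exact this
    have hβb : β = b := by
      have : β ∈ ({b} : Set V) := by rw [← h]; exact Or.inr rfl
      exact this
    exact hαβ (hαb.trans hβb.symm)

lemma ext_inn_false {X : Set V} (h3 : 3 ≤ X.encard) {v : V} (hv : v ∉ X)
    (hp : σ.IsPrimeOn (X ∪ {v})) (hm : σ.IsModuleOn (X ∪ {v}) X) : False := by
  rcases hp.2 X hm with h | h | ⟨b, h⟩
  · exact encard3_ne_empty h3 h
  · exact hv (by rw [h]; exact Or.inr rfl)
  · exact encard3_ne_singleton h3 b h

lemma ext_att_false {X : Set V} (h3 : 3 ≤ X.encard) {v α : V} (hv : v ∉ X)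
    (hα : α ∈ X) (hp : σ.IsPrimeOn (X ∪ {v}))
    (hm : σ.IsModuleOn (X ∪ {v}) {α, v}) : False := by
  rcases hp.2 _ hm with h | h | ⟨b, h⟩
  · exact absurd h (Set.insert_nonempty _ _).ne_empty
  · exact encard3_not_subset_pair h3 α v (by rw [h]; exact Set.subset_union_left)
  · have hαb : α = b := by
      have : α ∈ ({b} : Set V) := by rw [← h]; exact Or.inl rfl
      exact this
    have hvb : v = b := by
      have : v ∈ ({b} : Set V) := by rw [← h]; exact Or.inr rfl
      exact this
    exact hv ((hαb.trans hvb.symm) ▸ hα)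

lemma exists_nontrivial {W : Set V} (h3 : 3 ≤ W.encard) (hnp : ¬ σ.IsPrimeOn W) :
    ∃ M, σ.IsModuleOn W M ∧ M ≠ ∅ ∧ M ≠ W ∧ ∀ a, M ≠ {a} := by
  unfold IsPrimeOn at hnp
  push_neg at hnp
  obtain ⟨M, hM, h⟩ := hnp h3
  exact ⟨M, hM, h.1.ne_empty, h.2.1, h.2.2⟩

end TwoStructure

lemma interXvw {X : Set V} {v w : V} (hv : v ∉ X) (hvw : v ≠ w) :
    (X ∪ {v}) ∩ (X ∪ {w}) = X := by
  ext x
  constructor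
  · rintro ⟨h1 | h1, h2 | h2⟩
    · exact h1
    · exact h1
    · exact absurd ((mem_single_elim' h1) ▸ h2) hv
    · exact absurd ((mem_single_elim' h1) ▸ (mem_single_elim' h2) ▸ rfl) hvw
  · exact fun h => ⟨Or.inl h, Or.inl h⟩

lemma interTriple1 {X : Set V} {α v w : V} (hα : α ∈ X) (hw : w ∉ X)
    (hvw : v ≠ w) : ({α, v, w} : Set V) ∩ (X ∪ {v}) = {α, v} := by
  ext x
  constructor
  · rintro ⟨h1, h2⟩
    rcases mem_triple_elim' h1 with rfl | rfl | rfl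
    · exact Or.inl rfl
    · exact Or.inr rfl
    · rcases h2 with h | h
      · exact absurd h hw
      · exact absurd (mem_single_elim' h).symm hvw
  · intro h
    rcases mem_pair_elim' h with rfl | rfl
    · exact ⟨Or.inl rfl, Or.inl hα⟩
    · exact ⟨Or.inr (Or.inl rfl), Or.inr rfl⟩

lemma interTriple2 {X : Set V} {α v w : V} (hα : α ∈ X) (hv : v ∉ X)
    (hvw : v ≠ w) : ({α, v, w} : Set V) ∩ (X ∪ {w}) = {α, w} := by
  ext x
  constructor
  · rintro ⟨h1, h2⟩
    rcases mem_triple_elim' h1 with rfl | rfl | rfl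
    · exact Or.inl rfl
    · rcases h2 with h | h
      · exact absurd h hv
      · exact absurd (mem_single_elim' h) hvw
    · exact Or.inr rfl
  · intro h
    rcases mem_pair_elim' h with rfl | rfl
    · exact ⟨Or.inl rfl, Or.inl hα⟩
    · exact ⟨Or.inr (Or.inr rfl), Or.inr rfl⟩

lemma interPair1 {X : Set V} {α v : V} (hα : α ∈ X) :
    ({α, v} : Set V) ∩ (X ∪ {v}) = {α, v} :=
  Set.inter_eq_left.mpr (by
    intro x hx
    rcases mem_pair_elim' hx with rfl | rfl
    · exact Or.inl hα
    · exact Or.inr rfl)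

namespace TwoStructure

variable {σ : TwoStructure V}

lemma moduleCases1 {X M : Set V} {v : V} (hXp : σ.IsPrimeOn X) (hv : v ∉ X)
    (hM : σ.IsModuleOn (X ∪ {v}) M) (hne : M ≠ ∅) (hnW : M ≠ X ∪ {v})
    (hns : ∀ a, M ≠ {a}) :
    M = X ∨ ∃ α ∈ X, M = {α, v} := by
  have hrestr := restrictMod hM (Set.subset_union_left : X ⊆ X ∪ {v})
  rcases hXp.2 _ hrestr with h0 | h0 | ⟨α, h0⟩
  · exfalso
    have hsub : M ⊆ ({v} : Set V) := by
      intro m hm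
      rcases hM.1 hm with hmX | hm2
      · exact absurd ⟨hm, hmX⟩ (Set.eq_empty_iff_forall_notMem.mp h0 m)
      · exact hm2
    rcases Set.subset_singleton_iff_eq.mp hsub with h | h
    exacts [hne h, hns v h]
  · have hXM : X ⊆ M := by intro x hx; rw [← h0] at hx; exact hx.1
    by_cases hvM : v ∈ M
    · exact absurd (Set.Subset.antisymm hM.1 (by
        intro m hm
        rcases hm with h | h
        · exact hXM h
        · exact (mem_single_elim' h) ▸ hvM)) hnW
    · left
      refine Set.Subset.antisymm ?_ hXM
      intro m hm
      rcases hM.1 hm with h | h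
      · exact h
      · exact absurd ((mem_single_elim' h) ▸ hm) hvM
  · have hαMX : α ∈ M ∩ X := by rw [h0]; rfl
    have hsub : M ⊆ ({α, v} : Set V) := by
      intro m hm
      rcases hM.1 hm with hmX | hm2
      · exact Or.inl (mem_single_elim' (show m ∈ ({α} : Set V) by rw [← h0]; exact ⟨hm, hmX⟩))
      · exact Or.inr hm2
    by_cases hvM : v ∈ M
    · exact Or.inr ⟨α, hαMX.2, Set.Subset.antisymm hsub (by
        intro m hm
        rcases mem_pair_elim' hm with rfl | rfl
        exacts [hαMX.1, hvM])⟩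
    · exfalso
      apply hns α
      refine Set.Subset.antisymm ?_ (by intro m hm; exact (mem_single_elim' hm) ▸ hαMX.1)
      intro m hm
      rcases mem_pair_elim' (hsub hm) with rfl | rfl
      · rfl
      · exact absurd hm hvM

lemma moduleCases {X M : Set V} {v w : V} (hXp : σ.IsPrimeOn X)
    (hv : v ∉ X) (hw : w ∉ X) (hvw : v ≠ w)
    (hM : σ.IsModuleOn (X ∪ {v, w}) M) (hne : M ≠ ∅) (hnW : M ≠ X ∪ {v, w})
    (hns : ∀ a, M ≠ {a}) :
    M = X ∨ M = X ∪ {v} ∨ M = X ∪ {w} ∨ M = {v, w} ∨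
      ∃ α ∈ X, M = {α, v} ∨ M = {α, w} ∨ M = {α, v, w} := by
  have hrestr := restrictMod hM (Set.subset_union_left : X ⊆ X ∪ {v, w})
  rcases hXp.2 _ hrestr with h0 | h0 | ⟨α, h0⟩
  · -- M ∩ X = ∅
    have hsub : M ⊆ ({v, w} : Set V) := by
      intro m hm
      rcases hM.1 hm with hmX | hm2
      · exact absurd ⟨hm, hmX⟩ (Set.eq_empty_iff_forall_notMem.mp h0 m)
      · exact hm2
    have hvM : v ∈ M := by
      by_contra hvM
      have hsw : M ⊆ ({w} : Set V) := by
        intro m hm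
        rcases mem_pair_elim' (hsub hm) with rfl | rfl
        · exact absurd hm hvM
        · rfl
      rcases Set.subset_singleton_iff_eq.mp hsw with h | h
      exacts [hne h, hns w h]
    have hwM : w ∈ M := by
      by_contra hwM
      have hsw : M ⊆ ({v} : Set V) := by
        intro m hm
        rcases mem_pair_elim' (hsub hm) with rfl | rfl
        · rfl
        · exact absurd hm hwM
      rcases Set.subset_singleton_iff_eq.mp hsw with h | h
      exacts [hne h, hns v h]
    refine Or.inr (Or.inr (Or.inr (Or.inl (Set.Subset.antisymm hsub ?_))))
    intro m hm
    rcases mem_pair_elim' hm with rfl | rfl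
    exacts [hvM, hwM]
  · -- M ∩ X = X
    have hXM : X ⊆ M := by intro x hx; rw [← h0] at hx; exact hx.1
    by_cases hvM : v ∈ M <;> by_cases hwM : w ∈ M
    · exact absurd (Set.Subset.antisymm hM.1 (by
        intro m hm
        rcases hm with h | h
        · exact hXM h
        · rcases mem_pair_elim' h with rfl | rfl
          exacts [hvM, hwM])) hnW
    · refine Or.inr (Or.inl (Set.Subset.antisymm ?_ ?_))
      · intro m hm
        rcases hM.1 hm with h | h
        · exact Or.inl h
        · rcases mem_pair_elim' h with rfl | rfl
          · exact Or.inr rfl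
          · exact absurd hm hwM
      · intro m hm
        rcases hm with h | h
        · exact hXM h
        · exact (mem_single_elim' h) ▸ hvM
    · refine Or.inr (Or.inr (Or.inl (Set.Subset.antisymm ?_ ?_)))
      · intro m hm
        rcases hM.1 hm with h | h
        · exact Or.inl h
        · rcases mem_pair_elim' h with rfl | rfl
          · exact absurd hm hvM
          · exact Or.inr rfl
      · intro m hm
        rcases hm with h | h
        · exact hXM h
        · exact (mem_single_elim' h) ▸ hwM
    · left
      refine Set.Subset.antisymm ?_ hXM
      intro m hm
      rcases hM.1 hm with h | h
      · exact h
      · rcases mem_pair_elim' h with rfl | rfl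
        exacts [absurd hm hvM, absurd hm hwM]
  · -- M ∩ X = {α}
    have hαMX : α ∈ M ∩ X := by rw [h0]; rfl
    have hsub : M ⊆ ({α, v, w} : Set V) := by
      intro m hm
      rcases hM.1 hm with hmX | hm2
      · exact Or.inl (mem_single_elim' (show m ∈ ({α} : Set V) by rw [← h0]; exact ⟨hm, hmX⟩))
      · exact Or.inr hm2
    refine Or.inr (Or.inr (Or.inr (Or.inr ⟨α, hαMX.2, ?_⟩)))
    by_cases hvM : v ∈ M <;> by_cases hwM : w ∈ M
    · refine Or.inr (Or.inr (Set.Subset.antisymm hsub ?_))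
      intro m hm
      rcases mem_triple_elim' hm with rfl | rfl | rfl
      exacts [hαMX.1, hvM, hwM]
    · refine Or.inl (Set.Subset.antisymm ?_ ?_)
      · intro m hm
        rcases mem_triple_elim' (hsub hm) with rfl | rfl | rfl
        exacts [Or.inl rfl, Or.inr rfl, absurd hm hwM]
      · intro m hm
        rcases mem_pair_elim' hm with rfl | rfl
        exacts [hαMX.1, hvM]
    · refine Or.inr (Or.inl (Set.Subset.antisymm ?_ ?_))
      · intro m hm
        rcases mem_triple_elim' (hsub hm) with rfl | rfl | rfl
        exacts [Or.inl rfl, absurd hm hvM, Or.inr rfl]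
      · intro m hm
        rcases mem_pair_elim' hm with rfl | rfl
        exacts [hαMX.1, hwM]
    · exfalso
      apply hns α
      refine Set.Subset.antisymm ?_ (by intro m hm; exact (mem_single_elim' hm) ▸ hαMX.1)
      intro m hm
      rcases mem_triple_elim' (hsub hm) with rfl | rfl | rfl
      exacts [rfl, absurd hm hvM, absurd hm hwM]

end TwoStructure

end AuxLemmas

/-- Lemma 1.8 (Ehrenfeucht–Rozenberg): the outside partition, and the three
basic assertions about non-primality of two-vertex extensions. -/
theorem statement0 (σ : TwoStructure V) (X : Set V) (hX : X ⊂ Set.univ)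
    (hXp : σ.IsPrimeOn X) :
    (Disjoint (σ.extSet X) (σ.innSet X) ∧
      (∀ α ∈ X, Disjoint (σ.extSet X) (σ.attSet X α) ∧
        Disjoint (σ.innSet X) (σ.attSet X α)) ∧
      (∀ α ∈ X, ∀ β ∈ X, α ≠ β → Disjoint (σ.attSet X α) (σ.attSet X β)) ∧
      (σ.extSet X ∪ σ.innSet X ∪ (⋃ α ∈ X, σ.attSet X α)) = Xᶜ) ∧
    (∀ v ∈ σ.innSet X, ∀ w ∈ Xᶜ \ σ.innSet X,
      ¬ σ.IsPrimeOn (X ∪ {v, w}) → σ.IsModuleOn (X ∪ {v, w}) (X ∪ {w})) ∧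
    (∀ α ∈ X, ∀ v ∈ σ.attSet X α, ∀ w ∈ Xᶜ \ σ.attSet X α,
      ¬ σ.IsPrimeOn (X ∪ {v, w}) → σ.IsModuleOn (X ∪ {v, w}) {α, v}) ∧
    (∀ v ∈ σ.extSet X, ∀ w ∈ σ.extSet X, v ≠ w →
      ¬ σ.IsPrimeOn (X ∪ {v, w}) → σ.IsModuleOn (X ∪ {v, w}) {v, w}) := by
  have h3X := hXp.1
  refine ⟨⟨?_, ?_, ?_, ?_⟩, ?_, ?_, ?_⟩
  · -- Ext ⟂ ⟨X⟩
    rw [Set.disjoint_left]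
    rintro v ⟨hvX, hvp⟩ ⟨_, hvinn⟩
    exact TwoStructure.ext_inn_false h3X hvX hvp hvinn
  · -- Ext ⟂ X(α), ⟨X⟩ ⟂ X(α)
    rintro α hα
    constructor
    · rw [Set.disjoint_left]
      rintro v ⟨hvX, hvp⟩ ⟨_, hvatt⟩
      exact TwoStructure.ext_att_false h3X hvX hα hvp hvatt
    · rw [Set.disjoint_left]
      rintro v ⟨hvX, hvinn⟩ ⟨_, hvatt⟩
      exact TwoStructure.inn_att_false hXp hvX hα hvinn hvatt
  · -- X(α) ⟂ X(β)
    rintro α hα β hβ hαβ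
    rw [Set.disjoint_left]
    rintro v ⟨hvX, h1⟩ ⟨_, h2⟩
    exact TwoStructure.att_att_false hXp hvX hα hβ hαβ h1 h2
  · -- union
    apply Set.Subset.antisymm
    · rintro v hv
      rcases hv with (h | h) | h
      · exact h.1
      · exact h.1
      · simp only [Set.mem_iUnion] at h
        obtain ⟨α, hα, hv⟩ := h
        exact hv.1
    · intro v hv
      have hvX : v ∉ X := hv
      by_cases hp : σ.IsPrimeOn (X ∪ {v})
      · exact Or.inl (Or.inl ⟨hvX, hp⟩)
      · have h3v : 3 ≤ (X ∪ {v}).encard :=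
          h3X.trans (Set.encard_mono Set.subset_union_left)
        obtain ⟨M, hM, hne, hnW, hns⟩ := TwoStructure.exists_nontrivial h3v hp
        rcases TwoStructure.moduleCases1 hXp hvX hM hne hnW hns with
          hq | ⟨α, hα, hq⟩
        · subst M
          exact Or.inl (Or.inr ⟨hvX, hM⟩)
        · subst M
          refine Or.inr ?_
          simp only [Set.mem_iUnion]
          exact ⟨α, hα, hvX, hM⟩
  · -- part (1)
    rintro v ⟨hvX, hvinn⟩ w ⟨hwXc, hwni⟩ hnp
    have hwX : w ∉ X := hwXc
    have hvw : v ≠ w := fun h =>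
      hwni (h ▸ (show v ∈ σ.innSet X from ⟨hvX, hvinn⟩))
    have hsubv : X ∪ {v} ⊆ X ∪ {v, w} :=
      Set.union_subset_union_right X (fun x hx => Or.inl hx)
    have hsubw : X ∪ {w} ⊆ X ∪ {v, w} :=
      Set.union_subset_union_right X (fun x hx => Or.inr hx)
    have h3 : 3 ≤ (X ∪ {v, w}).encard :=
      h3X.trans (Set.encard_mono Set.subset_union_left)
    obtain ⟨M, hM, hne, hnW, hns⟩ := TwoStructure.exists_nontrivial h3 hnp
    have killX : ¬ σ.IsModuleOn (X ∪ {v, w}) X := by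
      intro h
      have h2 := TwoStructure.restrictMod h hsubw
      rw [Set.inter_eq_left.mpr Set.subset_union_left] at h2
      exact hwni ⟨hwX, h2⟩
    rcases TwoStructure.moduleCases hXp hvX hwX hvw hM hne hnW hns with
      hq | hq | hq | hq | ⟨α, hα, hq | hq | hq⟩
    · subst M; exact absurd hM killX
    · subst M
      exfalso; apply killX
      refine ⟨Set.subset_union_left, fun x hx y hy u hu => ?_⟩
      rcases hu.1 with h | h
      · exact absurd h hu.2
      · rcases mem_pair_elim' h with hue | hue <;> subst u
        · exact hvinn.2 x hx y hy v ⟨Or.inr rfl, hvX⟩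
        · exact hM.2 x (Or.inl hx) y (Or.inl hy) w
            ⟨Or.inr (Or.inr rfl), fun hh => by
              rcases hh with hh | hh
              · exact hwX hh
              · exact hvw (mem_single_elim' hh).symm⟩
    · subst M; exact hM
    · subst M
      exfalso; apply hwni
      refine ⟨hwX, Set.subset_union_left, fun x hx y hy u hu => ?_⟩
      have hu' : u = w := by
        rcases hu.1 with h | h
        · exact absurd h hu.2
        · exact mem_single_elim' h
      subst u
      have hxn : x ∉ ({v, w} : Set V) := fun h => by
        rcases mem_pair_elim' h with rfl | rfl
        exacts [hvX hx, hwX hx]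
      have hyn : y ∉ ({v, w} : Set V) := fun h => by
        rcases mem_pair_elim' h with rfl | rfl
        exacts [hvX hy, hwX hy]
      have hxw := hM.2 w (Or.inr rfl) v (Or.inl rfl) x ⟨Or.inl hx, hxn⟩
      have hyw := hM.2 w (Or.inr rfl) v (Or.inl rfl) y ⟨Or.inl hy, hyn⟩
      have hi := hvinn.2 x hx y hy v ⟨Or.inr rfl, hvX⟩
      exact ⟨σ.trans hxw.2 (σ.trans hi.1 (σ.symm hyw.2)),
             σ.trans hxw.1 (σ.trans hi.2 (σ.symm hyw.1))⟩
    · subst M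
      exfalso
      have h2 := TwoStructure.restrictMod hM hsubv
      rw [interPair1 hα] at h2
      exact TwoStructure.inn_att_false hXp hvX hα hvinn h2
    · subst M
      refine TwoStructure.modOfRep hsubw (Or.inl hα) ?_
      rintro x hx u hu
      have hu' : u = v := by
        rcases hu.1 with h | h
        · exact absurd (Or.inl h) hu.2
        · rcases mem_pair_elim' h with rfl | rfl
          · rfl
          · exact absurd (Or.inr rfl) hu.2
      subst u
      rcases hx with hxX | hxw
      · exact hvinn.2 x hxX α hα v ⟨Or.inr rfl, hvX⟩
      · have hxe : x = w := mem_single_elim' hxw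
        subst x
        exact hM.2 w (Or.inr rfl) α (Or.inl rfl) v
          ⟨Or.inr (Or.inl rfl), fun hh => by
            rcases mem_pair_elim' hh with hh | hh
            exacts [hvX (hh ▸ hα), hvw hh]⟩
    · subst M
      exfalso
      have h2 := TwoStructure.restrictMod hM hsubv
      rw [interTriple1 hα hwX hvw] at h2
      exact TwoStructure.inn_att_false hXp hvX hα hvinn h2
  · -- part (2)
    rintro α hα v ⟨hvX, hvatt⟩ w ⟨hwXc, hwna⟩ hnp
    have hwX : w ∉ X := hwXc
    have hvw : v ≠ w := fun h =>
      hwna (h ▸ (show v ∈ σ.attSet X α from ⟨hvX, hvatt⟩))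
    have hαw : α ≠ w := fun h => hwX (h ▸ hα)
    have hwatt : ¬ σ.IsModuleOn (X ∪ {w}) {α, w} := fun h => hwna ⟨hwX, h⟩
    have hsubv : X ∪ {v} ⊆ X ∪ {v, w} :=
      Set.union_subset_union_right X (fun x hx => Or.inl hx)
    have hsubw : X ∪ {w} ⊆ X ∪ {v, w} :=
      Set.union_subset_union_right X (fun x hx => Or.inr hx)
    have h3 : 3 ≤ (X ∪ {v, w}).encard :=
      h3X.trans (Set.encard_mono Set.subset_union_left)
    obtain ⟨M, hM, hne, hnW, hns⟩ := TwoStructure.exists_nontrivial h3 hnp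
    have hpairsub : ({α, v} : Set V) ⊆ X ∪ {v, w} := by
      intro x hx
      rcases mem_pair_elim' hx with rfl | rfl
      exacts [Or.inl hα, Or.inr (Or.inl rfl)]
    rcases TwoStructure.moduleCases hXp hvX hwX hvw hM hne hnW hns with
      hq | hq | hq | hq | ⟨β, hβ, hq | hq | hq⟩
    · subst M
      exfalso
      have h2 := TwoStructure.restrictMod hM hsubv
      rw [Set.inter_eq_left.mpr Set.subset_union_left] at h2
      exact TwoStructure.inn_att_false hXp hvX hα h2 hvatt
    · subst M
      refine TwoStructure.modOfRep hpairsub (Or.inl rfl) ?_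
      rintro x hx u hu
      have huα : u ≠ α := fun h => hu.2 (Or.inl h)
      rcases mem_pair_elim' hx with hxe | hxe <;> subst x
      · exact ⟨σ.refl _ huα.symm, σ.refl _ huα⟩
      · rcases hu.1 with h | h
        · exact hvatt.2 v (Or.inr rfl) α (Or.inl rfl) u ⟨Or.inl h, hu.2⟩
        · rcases mem_pair_elim' h with hue | hue
          · exact absurd (Or.inr hue) hu.2
          · subst u
            exact hM.2 v (Or.inr rfl) α (Or.inl hα) w
              ⟨Or.inr (Or.inr rfl), fun hh => by
                rcases hh with hh | hh
                · exact hwX hh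
                · exact hvw (mem_single_elim' hh).symm⟩
    · subst M
      exfalso
      have h2 := TwoStructure.restrictMod hM hsubv
      rw [interXvw hwX hvw.symm] at h2
      exact TwoStructure.inn_att_false hXp hvX hα h2 hvatt
    · subst M
      exfalso; apply hwatt
      refine TwoStructure.modOfRep (by
        intro x hx
        rcases mem_pair_elim' hx with rfl | rfl
        exacts [Or.inl hα, Or.inr rfl]) (Or.inl rfl : α ∈ ({α, w} : Set V)) ?_
      rintro x hx u hu
      have huX : u ∈ X := by
        rcases hu.1 with h | h
        · exact h
        · exact absurd (Or.inr h) hu.2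
      have huα : u ≠ α := fun h => hu.2 (Or.inl h)
      rcases mem_pair_elim' hx with hxe | hxe <;> subst x
      · exact ⟨σ.refl _ huα.symm, σ.refl _ huα⟩
      · have c1 := hM.2 w (Or.inr rfl) v (Or.inl rfl) u
          ⟨Or.inl huX, fun hh => by
            rcases mem_pair_elim' hh with rfl | rfl
            exacts [hvX huX, hwX huX]⟩
        have c2 := hvatt.2 v (Or.inr rfl) α (Or.inl rfl) u
          ⟨Or.inl huX, fun hh => by
            rcases mem_pair_elim' hh with rfl | rfl
            exacts [huα rfl, hvX huX]⟩
        exact ⟨σ.trans c1.1 c2.1, σ.trans c1.2 c2.2⟩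
    · by_cases hβα : β = α
      · subst β; subst M; exact hM
      · subst M
        exfalso
        have h2 := TwoStructure.restrictMod hM hsubv
        rw [interPair1 hβ] at h2
        exact TwoStructure.att_att_false hXp hvX hα hβ
          (fun h => hβα h.symm) hvatt h2
    · by_cases hβα : β = α
      · subst β; subst M
        exfalso
        have h2 := TwoStructure.restrictMod hM hsubw
        rw [interPair1 hα] at h2
        exact hwatt h2
      · subst M
        refine TwoStructure.modOfRep hpairsub (Or.inl rfl) ?_
        rintro x hx u hu
        have huα : u ≠ α := fun h => hu.2 (Or.inl h)
        rcases mem_pair_elim' hx with hxe | hxe <;> subst x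
        · exact ⟨σ.refl _ huα.symm, σ.refl _ huα⟩
        · rcases hu.1 with h | h
          · exact hvatt.2 v (Or.inr rfl) α (Or.inl rfl) u ⟨Or.inl h, hu.2⟩
          · rcases mem_pair_elim' h with hue | hue
            · exact absurd (Or.inr hue) hu.2
            · subst u
              have c1 := hM.2 w (Or.inr rfl) β (Or.inl rfl) v
                ⟨Or.inr (Or.inl rfl), fun hh => by
                  rcases mem_pair_elim' hh with hh | hh
                  exacts [hvX (hh ▸ hβ), hvw hh]⟩
              have c2 := hvatt.2 v (Or.inr rfl) α (Or.inl rfl) β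
                ⟨Or.inl hβ, fun hh => by
                  rcases hh with hh | hh
                  exacts [hβα hh, hvX ((mem_single_elim' hh) ▸ hβ)]⟩
              have c3 := hM.2 β (Or.inl rfl) w (Or.inr rfl) α
                ⟨Or.inl hα, fun hh => by
                  rcases hh with hh | hh
                  exacts [hβα hh.symm, hαw (mem_single_elim' hh)]⟩
              exact ⟨σ.trans c1.2 (σ.trans c2.1 c3.2),
                     σ.trans c1.1 (σ.trans c2.2 c3.1)⟩
    · by_cases hβα : β = α
      · subst β; subst M
        exfalso
        have h2 := TwoStructure.restrictMod hM hsubw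
        rw [interTriple2 hα hvX hvw] at h2
        exact hwatt h2
      · subst M
        exfalso
        have h2 := TwoStructure.restrictMod hM hsubv
        rw [interTriple1 hβ hwX hvw] at h2
        exact TwoStructure.att_att_false hXp hvX hα hβ
          (fun h => hβα h.symm) hvatt h2
  · -- part (3)
    rintro v ⟨hvX, hvp⟩ w ⟨hwX, hwp⟩ hvw hnp
    have hsubv : X ∪ {v} ⊆ X ∪ {v, w} :=
      Set.union_subset_union_right X (fun x hx => Or.inl hx)
    have hsubw : X ∪ {w} ⊆ X ∪ {v, w} :=
      Set.union_subset_union_right X (fun x hx => Or.inr hx)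
    have h3 : 3 ≤ (X ∪ {v, w}).encard :=
      h3X.trans (Set.encard_mono Set.subset_union_left)
    obtain ⟨M, hM, hne, hnW, hns⟩ := TwoStructure.exists_nontrivial h3 hnp
    rcases TwoStructure.moduleCases hXp hvX hwX hvw hM hne hnW hns with
      hq | hq | hq | hq | ⟨β, hβ, hq | hq | hq⟩
    · subst M
      exfalso
      have h2 := TwoStructure.restrictMod hM hsubv
      rw [Set.inter_eq_left.mpr Set.subset_union_left] at h2
      exact TwoStructure.ext_inn_false h3X hvX hvp h2
    · subst M
      exfalso
      have h2 := TwoStructure.restrictMod hM hsubw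
      rw [interXvw hvX hvw] at h2
      exact TwoStructure.ext_inn_false h3X hwX hwp h2
    · subst M
      exfalso
      have h2 := TwoStructure.restrictMod hM hsubv
      rw [interXvw hwX hvw.symm] at h2
      exact TwoStructure.ext_inn_false h3X hvX hvp h2
    · subst M; exact hM
    · subst M
      exfalso
      have h2 := TwoStructure.restrictMod hM hsubv
      rw [interPair1 hβ] at h2
      exact TwoStructure.ext_att_false h3X hvX hβ hvp h2
    · subst M
      exfalso
      have h2 := TwoStructure.restrictMod hM hsubw
      rw [interPair1 hβ] at h2
      exact TwoStructure.ext_att_false h3X hwX hβ hwp h2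
    · subst M
      exfalso
      have h2 := TwoStructure.restrictMod hM hsubv
      rw [interTriple1 hβ hwX hvw] at h2
      exact TwoStructure.ext_att_false h3X hvX hβ hvp h2
end

section
/- Let σ be a 2-structure and let X ⊊ V(σ) be such that σ[X] is prime and |X̄| ≥ 2. If σ is prime, then there exist distinct v, w ∈ X̄ such that σ[X∪{v,w}] is prime. -/
/-!
Formalization of 2-structures (Ehrenfeucht et al.), modules, primality,
criticality, the outside partition/graph, and (discrete) half graphs.
-/

universe u

variable {V : Type u}

section ERAux

open Set

variable {V : Type u} (σ : TwoStructure V) (X : Set V)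

/-- `{α, v}` is a module of `σ[X ∪ {v}]` (raw condition). -/
def ERAtt (α v : V) : Prop :=
  v ∉ X ∧ α ∈ X ∧ ∀ u ∈ X, u ≠ α → σ.rel (α, u) (v, u) ∧ σ.rel (u, α) (u, v)

/-- `X` is a module of `σ[X ∪ {v}]` (raw condition). -/
def ERInn (v : V) : Prop :=
  v ∉ X ∧ ∀ x ∈ X, ∀ y ∈ X, σ.rel (x, v) (y, v) ∧ σ.rel (v, x) (v, y)

/-- `v` and `w` look alike from `X`. -/
def EREqui (v w : V) : Prop :=
  ∀ x ∈ X, σ.rel (v, x) (w, x) ∧ σ.rel (x, v) (x, w)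

/-- `X ∪ {a}` is a module of `σ[X ∪ {a,b}]` (raw condition). -/
def ERModXv (a b : V) : Prop :=
  ERInn σ X b ∧ ∀ x ∈ X, σ.rel (a, b) (x, b) ∧ σ.rel (b, a) (b, x)

variable {σ X}

lemma er_three (h3 : 3 ≤ X.encard) :
    ∃ a ∈ X, ∃ b ∈ X, ∃ c ∈ X, a ≠ b ∧ a ≠ c ∧ b ≠ c := by
  obtain ⟨a, b, ha, hb, hab⟩ :=
    Set.one_lt_encard_iff.mp (lt_of_lt_of_le (by norm_num) h3)
  by_cases hsub : X ⊆ {a, b}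
  · have h2 : X.encard ≤ 2 := by
      calc X.encard ≤ ({a, b} : Set V).encard := Set.encard_le_encard hsub
        _ = 2 := Set.encard_pair hab
    have := h3.trans h2
    norm_num at this
  · rw [Set.not_subset] at hsub
    obtain ⟨c, hc, hc'⟩ := hsub
    simp only [Set.mem_insert_iff, Set.mem_singleton_iff, not_or] at hc'
    exact ⟨a, ha, b, hb, c, hc, hab, Ne.symm hc'.1, Ne.symm hc'.2⟩

lemma er_kill {W M : Set V} (hP : σ.IsPrimeOn W) (hM : σ.IsModuleOn W M)
    {a b c : V} (ha : a ∈ M) (hb : b ∈ M) (hab : a ≠ b) (hc : c ∈ W) (hcM : c ∉ M) :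
    False := by
  rcases hP.2 M hM with h | h | ⟨d, h⟩
  · rw [h] at ha; exact ha
  · rw [h] at hcM; exact hcM hc
  · rw [h] at ha hb
    exact hab (ha.trans hb.symm)

lemma er_notPrime_elim {W : Set V} (h3 : 3 ≤ W.encard) (h : ¬ σ.IsPrimeOn W) :
    ∃ M, σ.IsModuleOn W M ∧ M ≠ ∅ ∧ M ≠ W ∧ ∀ c, M ≠ {c} := by
  rcases not_and_or.mp h with h' | h'
  · exact absurd h3 h'
  · push_neg at h'
    obtain ⟨M, hM, h1⟩ := h'
    refine ⟨M, hM, Set.nonempty_iff_ne_empty.mp h1.1, h1.2.1, h1.2.2⟩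

lemma er_classify (hXp : σ.IsPrimeOn X) {v w : V} (hv : v ∉ X) (hw : w ∉ X)
    (hvw : v ≠ w) {M : Set V} (hM : σ.IsModuleOn (X ∪ {v, w}) M)
    (hne : M ≠ ∅) (hnW : M ≠ X ∪ {v, w}) (hns : ∀ c, M ≠ {c}) :
    EREqui σ X v w
    ∨ (∃ β ∈ X, (ERAtt σ X β v ∧ ERAtt σ X β w)
        ∨ (ERAtt σ X β v ∧ σ.rel (β, w) (v, w) ∧ σ.rel (w, β) (w, v))
        ∨ (ERAtt σ X β w ∧ σ.rel (β, v) (w, v) ∧ σ.rel (v, β) (v, w)))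
    ∨ (ERInn σ X v ∧ ERInn σ X w)
    ∨ ERModXv σ X v w ∨ ERModXv σ X w v := by
  have hYmem : ∀ m, m ∈ X ∪ ({v, w} : Set V) ↔ m ∈ X ∨ m = v ∨ m = w := by
    intro m; simp only [Set.mem_union, Set.mem_insert_iff, Set.mem_singleton_iff]
  have hvY : v ∈ X ∪ ({v, w} : Set V) := (hYmem v).mpr (Or.inr (Or.inl rfl))
  have hwY : w ∈ X ∪ ({v, w} : Set V) := (hYmem w).mpr (Or.inr (Or.inr rfl))
  have hMX : σ.IsModuleOn X (M ∩ X) := by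
    refine ⟨Set.inter_subset_right, fun x hx y hy u hu => ?_⟩
    exact hM.2 x hx.1 y hy.1 u ⟨Set.mem_union_left _ hu.1, fun h => hu.2 ⟨h, hu.1⟩⟩
  rcases hXp.2 _ hMX with h0 | hXeq | ⟨β, hβ⟩
  · -- M ∩ X = ∅
    have hMin : ∀ m ∈ M, m ∉ X := fun m hm hx =>
      (Set.eq_empty_iff_forall_notMem.mp h0 m) ⟨hm, hx⟩
    by_cases hvM : v ∈ M
    · by_cases hwM : w ∈ M
      · left
        intro x hx
        exact hM.2 v hvM w hwM x ⟨Set.mem_union_left _ hx, fun h => hMin x h hx⟩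
      · exact absurd (Set.eq_singleton_iff_unique_mem.mpr ⟨hvM, fun m hm => by
          rcases (hYmem m).mp (hM.1 hm) with h | h | h
          · exact absurd h (hMin m hm)
          · exact h
          · exact absurd (h ▸ hm) hwM⟩) (hns v)
    · by_cases hwM : w ∈ M
      · exact absurd (Set.eq_singleton_iff_unique_mem.mpr ⟨hwM, fun m hm => by
          rcases (hYmem m).mp (hM.1 hm) with h | h | h
          · exact absurd h (hMin m hm)
          · exact absurd (h ▸ hm) hvM
          · exact h⟩) (hns w)
      · exfalso
        apply hne
        ext m
        simp only [Set.mem_empty_iff_false, iff_false]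
        intro hm
        rcases (hYmem m).mp (hM.1 hm) with h | h | h
        · exact hMin m hm h
        · exact hvM (h ▸ hm)
        · exact hwM (h ▸ hm)
  · -- M ∩ X = X
    have hXM : ∀ x ∈ X, x ∈ M := fun x hx => by
      have : x ∈ M ∩ X := by rw [hXeq]; exact hx
      exact this.1
    by_cases hvM : v ∈ M
    · by_cases hwM : w ∈ M
      · exfalso
        apply hnW
        refine Set.Subset.antisymm hM.1 (fun m hm => ?_)
        rcases (hYmem m).mp hm with h | h | h
        · exact hXM m h
        · exact h ▸ hvM
        · exact h ▸ hwM
      · right; right; right; left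
        refine ⟨⟨hw, fun x hx y hy => ?_⟩, fun x hx => ?_⟩
        · exact hM.2 x (hXM x hx) y (hXM y hy) w ⟨hwY, hwM⟩
        · exact hM.2 v hvM x (hXM x hx) w ⟨hwY, hwM⟩
    · by_cases hwM : w ∈ M
      · right; right; right; right
        refine ⟨⟨hv, fun x hx y hy => ?_⟩, fun x hx => ?_⟩
        · exact hM.2 x (hXM x hx) y (hXM y hy) v ⟨hvY, hvM⟩
        · exact hM.2 w hwM x (hXM x hx) v ⟨hvY, hvM⟩
      · right; right; left
        refine ⟨⟨hv, fun x hx y hy => ?_⟩, ⟨hw, fun x hx y hy => ?_⟩⟩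
        · exact hM.2 x (hXM x hx) y (hXM y hy) v ⟨hvY, hvM⟩
        · exact hM.2 x (hXM x hx) y (hXM y hy) w ⟨hwY, hwM⟩
  · -- M ∩ X = {β}
    have hβM : β ∈ M ∧ β ∈ X := by
      have : β ∈ M ∩ X := hβ ▸ Set.mem_singleton β
      exact ⟨this.1, this.2⟩
    have hXonly : ∀ u ∈ X, u ≠ β → u ∉ M := fun u hu hune hm =>
      hune (by have : u ∈ M ∩ X := ⟨hm, hu⟩; rw [hβ] at this; exact this)
    by_cases hvM : v ∈ M
    · have hAv : ERAtt σ X β v :=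
        ⟨hv, hβM.2, fun u hu hune =>
          hM.2 β hβM.1 v hvM u ⟨Set.mem_union_left _ hu, hXonly u hu hune⟩⟩
      by_cases hwM : w ∈ M
      · have hAw : ERAtt σ X β w :=
          ⟨hw, hβM.2, fun u hu hune =>
            hM.2 β hβM.1 w hwM u ⟨Set.mem_union_left _ hu, hXonly u hu hune⟩⟩
        exact Or.inr (Or.inl ⟨β, hβM.2, Or.inl ⟨hAv, hAw⟩⟩)
      · exact Or.inr (Or.inl ⟨β, hβM.2, Or.inr (Or.inl
          ⟨hAv, hM.2 β hβM.1 v hvM w ⟨hwY, hwM⟩⟩)⟩)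
    · by_cases hwM : w ∈ M
      · have hAw : ERAtt σ X β w :=
          ⟨hw, hβM.2, fun u hu hune =>
            hM.2 β hβM.1 w hwM u ⟨Set.mem_union_left _ hu, hXonly u hu hune⟩⟩
        exact Or.inr (Or.inl ⟨β, hβM.2, Or.inr (Or.inr
          ⟨hAw, hM.2 β hβM.1 w hwM v ⟨hvY, hvM⟩⟩)⟩)
      · exact absurd (Set.eq_singleton_iff_unique_mem.mpr ⟨hβM.1, fun m hm => by
          rcases (hYmem m).mp (hM.1 hm) with h | h | h
          · have : m ∈ M ∩ X := ⟨hm, h⟩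
            rw [hβ] at this; exact this
          · exact absurd (h ▸ hm) hvM
          · exact absurd (h ▸ hm) hwM⟩) (hns β)

lemma er_third (h3 : 3 ≤ X.encard) (α β : V) : ∃ γ ∈ X, γ ≠ α ∧ γ ≠ β := by
  by_cases hsub : X ⊆ {α, β}
  · have h2 : X.encard ≤ 2 := by
      calc X.encard ≤ ({α, β} : Set V).encard := Set.encard_le_encard hsub
        _ ≤ ({β} : Set V).encard + 1 := Set.encard_insert_le _ _
        _ = 2 := by rw [Set.encard_singleton]; rfl
    have := h3.trans h2
    norm_num at this
  · rw [Set.not_subset] at hsub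
    obtain ⟨γ, hγ, h⟩ := hsub
    simp only [Set.mem_insert_iff, Set.mem_singleton_iff, not_or] at h
    exact ⟨γ, hγ, h.1, h.2⟩

lemma er_att_unique (hXp : σ.IsPrimeOn X) {α β v : V}
    (h1 : ERAtt σ X α v) (h2 : ERAtt σ X β v) (hne : α ≠ β) : False := by
  have h3 := hXp.1
  have key : ∀ u ∈ X, u ≠ α → u ≠ β → σ.rel (α, u) (β, u) ∧ σ.rel (u, α) (u, β) := by
    intro u hu hu1 hu2
    obtain ⟨ra, ra'⟩ := h1.2.2 u hu hu1
    obtain ⟨rb, rb'⟩ := h2.2.2 u hu hu2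
    exact ⟨σ.trans ra (σ.symm rb), σ.trans ra' (σ.symm rb')⟩
  have hmod : σ.IsModuleOn X {α, β} := by
    refine ⟨?_, fun x hx y hy u hu => ?_⟩
    · intro m hm
      rcases Set.mem_insert_iff.mp hm with rfl | hm
      · exact h1.2.1
      · rw [Set.mem_singleton_iff] at hm; exact hm ▸ h2.2.1
    · have hu1 : u ≠ α := fun h => hu.2 (h ▸ Set.mem_insert _ _)
      have hu2 : u ≠ β := fun h => hu.2 (h ▸ Set.mem_insert_of_mem _ rfl)
      obtain ⟨k1, k2⟩ := key u hu.1 hu1 hu2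
      have f : ∀ z ∈ ({α, β} : Set V), σ.rel (z, u) (α, u) ∧ σ.rel (u, z) (u, α) := by
        intro z hz
        rcases Set.mem_insert_iff.mp hz with rfl | hz
        · exact ⟨σ.refl _ (Ne.symm hu1), σ.refl _ hu1⟩
        · rw [Set.mem_singleton_iff] at hz; subst hz
          exact ⟨σ.symm k1, σ.symm k2⟩
      obtain ⟨fx1, fx2⟩ := f x hx
      obtain ⟨fy1, fy2⟩ := f y hy
      exact ⟨σ.trans fx1 (σ.symm fy1), σ.trans fx2 (σ.symm fy2)⟩
  obtain ⟨γ, hγ, hγα, hγβ⟩ := er_third h3 α β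
  refine er_kill hXp hmod (a := α) (b := β) (Set.mem_insert _ _)
    (Set.mem_insert_of_mem _ rfl) hne hγ ?_
  intro h
  rcases Set.mem_insert_iff.mp h with h | h
  · exact hγα h
  · exact hγβ (Set.mem_singleton_iff.mp h)

lemma er_inn_att (hXp : σ.IsPrimeOn X) {α v : V}
    (hI : ERInn σ X v) (hA : ERAtt σ X α v) : False := by
  have h3 := hXp.1
  have hmod : σ.IsModuleOn X (X \ {α}) := by
    refine ⟨Set.diff_subset, fun x hx y hy u hu => ?_⟩
    have huα : u = α := by
      by_contra h
      exact hu.2 ⟨hu.1, fun hm => h (Set.mem_singleton_iff.mp hm)⟩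
    rw [huα]
    have hxα : x ≠ α := fun h => hx.2 (Set.mem_singleton_iff.mpr h)
    have hyα : y ≠ α := fun h => hy.2 (Set.mem_singleton_iff.mpr h)
    obtain ⟨ax1, ax2⟩ := hA.2.2 x hx.1 hxα
    obtain ⟨ay1, ay2⟩ := hA.2.2 y hy.1 hyα
    obtain ⟨i1, i2⟩ := hI.2 x hx.1 y hy.1
    exact ⟨σ.trans ax2 (σ.trans i1 (σ.symm ay2)), σ.trans ax1 (σ.trans i2 (σ.symm ay1))⟩
  obtain ⟨γ, hγ, hγα, _⟩ := er_third h3 α α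
  obtain ⟨δ, hδ, hδα, hδγ⟩ := er_third h3 α γ
  exact er_kill hXp hmod (a := γ) (b := δ) ⟨hγ, fun h => hγα (Set.mem_singleton_iff.mp h)⟩
    ⟨hδ, fun h => hδα (Set.mem_singleton_iff.mp h)⟩ (Ne.symm hδγ) hA.2.1 (fun h => h.2 rfl)

lemma er_equi_att {α v w : V} (hA : ERAtt σ X α v) (hw : w ∉ X)
    (hE : EREqui σ X v w) : ERAtt σ X α w := by
  refine ⟨hw, hA.2.1, fun u hu hune => ?_⟩
  obtain ⟨a1, a2⟩ := hA.2.2 u hu hune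
  obtain ⟨e1, e2⟩ := hE u hu
  exact ⟨σ.trans a1 e1, σ.trans a2 e2⟩

lemma er_equi_inn {v w : V} (hE : EREqui σ X v w) (hI : ERInn σ X w)
    (hv : v ∉ X) : ERInn σ X v := by
  refine ⟨hv, fun x hx y hy => ?_⟩
  obtain ⟨ex1, ex2⟩ := hE x hx
  obtain ⟨ey1, ey2⟩ := hE y hy
  obtain ⟨i1, i2⟩ := hI.2 x hx y hy
  exact ⟨σ.trans ex2 (σ.trans i1 (σ.symm ey2)), σ.trans ex1 (σ.trans i2 (σ.symm ey1))⟩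

lemma er_pairFact (hcon : ∀ v ∈ Xᶜ, ∀ w ∈ Xᶜ, v ≠ w → ¬ σ.IsPrimeOn (X ∪ {v, w}))
    (hA : ¬ ∃ α v, ERAtt σ X α v) (hXp : σ.IsPrimeOn X) {v w : V}
    (hv : v ∉ X) (hw : w ∉ X) (hvw : v ≠ w) :
    EREqui σ X v w ∨ (ERInn σ X v ∧ ERInn σ X w)
      ∨ ERModXv σ X v w ∨ ERModXv σ X w v := by
  have h3Y : 3 ≤ (X ∪ ({v, w} : Set V)).encard :=
    hXp.1.trans (Set.encard_le_encard Set.subset_union_left)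
  obtain ⟨M, hM, hne, hnW, hns⟩ := er_notPrime_elim h3Y (hcon v hv w hw hvw)
  rcases er_classify hXp hv hw hvw hM hne hnW hns with h | ⟨β, hβ, hB⟩ | h | h | h
  · exact Or.inl h
  · exfalso
    apply hA
    rcases hB with ⟨h1, _⟩ | ⟨h1, _⟩ | ⟨h1, _⟩
    exacts [⟨β, v, h1⟩, ⟨β, v, h1⟩, ⟨β, w, h1⟩]
  · exact Or.inr (Or.inl h)
  · exact Or.inr (Or.inr (Or.inl h))
  · exact Or.inr (Or.inr (Or.inr h))

end ERAux

/-- The parity theorem: if `σ` is prime and `σ[X]` is prime with `|X̄| ≥ 2`,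
then some two-vertex extension of `X` induces a prime substructure. -/
theorem statement1 (σ : TwoStructure V) (X : Set V) (hX : X ⊂ Set.univ)
    (hXp : σ.IsPrimeOn X) (hcard : 2 ≤ Xᶜ.encard)
    (hσ : σ.IsPrimeOn Set.univ) :
    ∃ v ∈ Xᶜ, ∃ w ∈ Xᶜ, v ≠ w ∧ σ.IsPrimeOn (X ∪ {v, w}) := by
  by_contra hcon
  push_neg at hcon
  have h3 := hXp.1
  obtain ⟨p, q, hp, hq, hpq⟩ :=
    Set.one_lt_encard_iff.mp (lt_of_lt_of_le (by norm_num) hcard)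
  by_cases hA : ∃ α v, ERAtt σ X α v
  · obtain ⟨α, v, hAtt⟩ := hA
    by_cases hsp : ∃ b w, ERAtt σ X α b ∧ w ∉ X ∧ w ≠ b ∧
        ¬(σ.rel (α, w) (b, w) ∧ σ.rel (w, α) (w, b)) ∧ ¬ ERAtt σ X α w
    · obtain ⟨b, w, hAb, hwX, hwb, hsplit, hnAw⟩ := hsp
      refine hcon b hAb.1 w hwX (Ne.symm hwb)
        ⟨h3.trans (Set.encard_le_encard Set.subset_union_left), fun M hM => ?_⟩
      by_contra hbad
      push_neg at hbad
      obtain ⟨h1, h2, h4⟩ := hbad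
      exfalso
      rcases er_classify hXp hAb.1 hwX (Ne.symm hwb) hM (Set.nonempty_iff_ne_empty.mp h1) h2 h4 with
        hE | ⟨β, hβ, hB⟩ | ⟨hIb, _⟩ | hD | hE'
      · exact hnAw (er_equi_att hAb hwX hE)
      · rcases hB with ⟨hAb', hAw'⟩ | ⟨hAb', hrel⟩ | ⟨hAw', hrel⟩
        · by_cases hβα : β = α
          · exact hnAw (hβα ▸ hAw')
          · exact er_att_unique hXp hAb hAb' (Ne.symm hβα)
        · by_cases hβα : β = α
          · exact hsplit (hβα ▸ hrel)
          · exact er_att_unique hXp hAb hAb' (Ne.symm hβα)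
        · by_cases hβα : β = α
          · exact hnAw (hβα ▸ hAw')
          · have hβX : β ∈ X := hAw'.2.1
            obtain ⟨w1, w2⟩ := hAw'.2.2 α hAb.2.1 (fun h => hβα h.symm)
            obtain ⟨b1, b2⟩ := hAb.2.2 β hβX hβα
            obtain ⟨r1, r2⟩ := hrel
            exact hsplit ⟨σ.trans (σ.symm w2) (σ.trans b1 r2),
              σ.trans (σ.symm w1) (σ.trans b2 r1)⟩
      · exact er_inn_att hXp hIb hAb
      · obtain ⟨d1, d2⟩ := hD.2 α hAb.2.1
        exact hsplit ⟨σ.symm d1, σ.symm d2⟩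
      · exact er_inn_att hXp hE'.1 hAb
    · push_neg at hsp
      have key : ∀ u, u ∉ insert α {u | ERAtt σ X α u} →
          ∀ b ∈ insert α {u | ERAtt σ X α u},
            σ.rel (b, u) (α, u) ∧ σ.rel (u, b) (u, α) := by
        intro u hu b hb
        have huα : u ≠ α := fun h => hu (h ▸ Set.mem_insert _ _)
        rcases Set.mem_insert_iff.mp hb with rfl | hb'
        · exact ⟨σ.refl _ (Ne.symm huα), σ.refl _ huα⟩
        · by_cases huX : u ∈ X
          · obtain ⟨a1, a2⟩ := hb'.2.2 u huX huα
            exact ⟨σ.symm a1, σ.symm a2⟩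
          · have hnAu : ¬ ERAtt σ X α u := fun h => hu (Set.mem_insert_of_mem _ h)
            have hub : u ≠ b := fun h => hnAu (h ▸ hb')
            by_cases hre : σ.rel (α, u) (b, u) ∧ σ.rel (u, α) (u, b)
            · exact ⟨σ.symm hre.1, σ.symm hre.2⟩
            · exact absurd (hsp b u hb' huX hub (fun h1 h2 => hre ⟨h1, h2⟩)) hnAu
      have hmod : σ.IsModuleOn Set.univ (insert α {u | ERAtt σ X α u}) := by
        refine ⟨Set.subset_univ _, fun x hx y hy u hu => ?_⟩
        obtain ⟨k1, k2⟩ := key u hu.2 x hx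
        obtain ⟨l1, l2⟩ := key u hu.2 y hy
        exact ⟨σ.trans k1 (σ.symm l1), σ.trans k2 (σ.symm l2)⟩
      obtain ⟨γ, hγ, hγα, _⟩ := er_third h3 α α
      refine er_kill hσ hmod (a := α) (b := v) (Set.mem_insert _ _)
        (Set.mem_insert_of_mem _ hAtt) (fun h => hAtt.1 (h ▸ hAtt.2.1))
        (Set.mem_univ γ) ?_
      intro hγM
      rcases Set.mem_insert_iff.mp hγM with h | h
      · exact hγα h
      · exact h.1 hγ
  · have pf : ∀ v w : V, v ∉ X → w ∉ X → v ≠ w →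
        EREqui σ X v w ∨ (ERInn σ X v ∧ ERInn σ X w)
          ∨ ERModXv σ X v w ∨ ERModXv σ X w v :=
      fun v w hv hw hvw => er_pairFact hcon hA hXp hv hw hvw
    obtain ⟨a0, ha0, hne0⟩ := er_third h3 p p
    obtain ⟨b0, hb0, hb0a, _⟩ := er_third h3 a0 a0
    by_cases hAllInn : ∀ u, u ∉ X → ERInn σ X u
    · have hmod : σ.IsModuleOn Set.univ X :=
        ⟨Set.subset_univ _, fun x hx y hy u hu => (hAllInn u hu.2).2 x hx y hy⟩
      exact er_kill hσ hmod ha0 hb0 (Ne.symm hb0a) (Set.mem_univ p) hp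
    · push_neg at hAllInn
      obtain ⟨v₀, hv₀X, hv₀⟩ := hAllInn
      by_cases hI : ∃ u, u ∉ X ∧ ERInn σ X u
      · obtain ⟨u₀, hu₀X, hu₀⟩ := hI
        have key : ∀ z, z ∉ X ∪ {u | u ∉ X ∧ ¬ ERInn σ X u} →
            ∀ b ∈ X ∪ {u | u ∉ X ∧ ¬ ERInn σ X u}, ∀ x ∈ X,
              σ.rel (b, z) (x, z) ∧ σ.rel (z, b) (z, x) := by
          intro z hz b hb x hx
          have hzX : z ∉ X := fun h => hz (Set.mem_union_left _ h)
          have hzI : ERInn σ X z := by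
            by_contra h
            exact hz (Set.mem_union_right _ ⟨hzX, h⟩)
          rcases hb with hb | hb
          · exact hzI.2 b hb x hx
          · have hbz : b ≠ z := fun h => hb.2 (h ▸ hzI)
            rcases pf b z hb.1 hzX hbz with hE | ⟨hIb, _⟩ | hD | hD'
            · exact absurd (er_equi_inn hE hzI hb.1) hb.2
            · exact absurd hIb hb.2
            · exact hD.2 x hx
            · exact absurd hD'.1 hb.2
        have hmod : σ.IsModuleOn Set.univ (X ∪ {u | u ∉ X ∧ ¬ ERInn σ X u}) := by
          refine ⟨Set.subset_univ _, fun x hx y hy z hz => ?_⟩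
          obtain ⟨k1, k2⟩ := key z hz.2 x hx a0 ha0
          obtain ⟨l1, l2⟩ := key z hz.2 y hy a0 ha0
          exact ⟨σ.trans k1 (σ.symm l1), σ.trans k2 (σ.symm l2)⟩
        refine er_kill hσ hmod (a := a0) (b := v₀) (Set.mem_union_left _ ha0)
          (Set.mem_union_right _ ⟨hv₀X, hv₀⟩) (fun h => hv₀X (h ▸ ha0))
          (Set.mem_univ u₀) ?_
        intro h
        rcases h with h | h
        · exact hu₀X h
        · exact h.2 hu₀
      · push_neg at hI
        have hmod : σ.IsModuleOn Set.univ Xᶜ := by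
          refine ⟨Set.subset_univ _, fun x hx y hy z hz => ?_⟩
          have hzX : z ∈ X := by simpa using hz.2
          by_cases hxy : x = y
          · subst hxy
            have hxz : x ≠ z := fun h => hx (h ▸ hzX)
            exact ⟨σ.refl _ hxz, σ.refl _ (Ne.symm hxz)⟩
          · rcases pf x y hx hy hxy with hE | ⟨hIx, _⟩ | hD | hD'
            · exact hE z hzX
            · exact absurd hIx (hI x hx)
            · exact absurd hD.1 (hI y hy)
            · exact absurd hD'.1 (hI x hx)
        exact er_kill hσ hmod hp hq hpq (Set.mem_univ a0) (fun h => h ha0)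
end

section
/- Let σ be a prime 2-structure and let X ⊊ V(σ) be such that σ[X] is prime. For each x ∈ X̄, there exists a finite subset F of X̄ with x ∈ F such that σ[X∪F] is prime. -/
/-!
Formalization of 2-structures (Ehrenfeucht et al.), modules, primality,
criticality, the outside partition/graph, and (discrete) half graphs.
-/

universe u

variable {V : Type u}

namespace TwoStructure
variable (σ : TwoStructure V)

/-- `v` distinguishes the pair `{p,q}`. -/
def Dis (v p q : V) : Prop :=
  v ≠ p ∧ v ≠ q ∧ ¬ (σ.rel (p, v) (q, v) ∧ σ.rel (v, p) (v, q))

/-- `x ∉ Y` and `Y` is a module of `σ[Y ∪ {x}]`. -/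
def Hol (Y : Set V) (x : V) : Prop := x ∉ Y ∧ σ.IsModuleOn (Y ∪ {x}) Y

/-- `x ∉ Y` and `{α,x}` is a module of `σ[Y ∪ {x}]`. -/
def Att (Y : Set V) (α x : V) : Prop := x ∉ Y ∧ σ.IsModuleOn (Y ∪ {x}) {α, x}

variable {σ}

lemma not_dis {v p q : V} (hp : v ≠ p) (hq : v ≠ q)
    (h1 : σ.rel (p, v) (q, v)) (h2 : σ.rel (v, p) (v, q)) : ¬ σ.Dis v p q := by
  rintro ⟨-, -, h⟩; exact h ⟨h1, h2⟩

lemma rel_of_not_dis {v p q : V} (h : ¬ σ.Dis v p q) (hp : v ≠ p) (hq : v ≠ q) :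
    σ.rel (p, v) (q, v) ∧ σ.rel (v, p) (v, q) := by
  by_contra hc; exact h ⟨hp, hq, hc⟩

lemma mod_rel {W M : Set V} (h : σ.IsModuleOn W M) {p q v : V}
    (hp : p ∈ M) (hq : q ∈ M) (hv : v ∈ W) (hvM : v ∉ M) :
    σ.rel (p, v) (q, v) ∧ σ.rel (v, p) (v, q) :=
  h.2 p hp q hq v ⟨hv, hvM⟩

/-- restriction of a module to a subset. -/
lemma mod_restrict {W U M : Set V} (h : σ.IsModuleOn W M) (hU : U ⊆ W) :
    σ.IsModuleOn U (M ∩ U) := by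
  refine ⟨Set.inter_subset_right, ?_⟩
  rintro p ⟨hpM, -⟩ q ⟨hqM, -⟩ v ⟨hvU, hv⟩
  exact h.2 p hpM q hqM v ⟨hU hvU, fun hvM => hv ⟨hvM, hvU⟩⟩

lemma prime_not_module {W M : Set V} (h : σ.IsPrimeOn W) (hM : σ.IsModuleOn W M)
    (h0 : M ≠ ∅) (hW : M ≠ W) (h1 : ∀ v, M ≠ {v}) : False := by
  rcases h.2 M hM with h' | h' | ⟨v, h'⟩
  exacts [h0 h', hW h', h1 v h']

lemma two_in_diff {Y : Set V} (h : σ.IsPrimeOn Y) {α : V} (hα : α ∈ Y) :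
    ∃ β ∈ Y, ∃ γ ∈ Y, β ≠ α ∧ γ ≠ α ∧ β ≠ γ := by
  have h3 := h.1
  have hd : 1 < (Y \ {α}).encard := by
    have he := Set.encard_diff_singleton_add_one hα
    have h2 : (1 : ℕ∞) + 1 + 1 ≤ (Y \ {α}).encard + 1 := by
      rw [he]; exact le_trans (by norm_num) h3
    have h4 := (ENat.add_le_add_iff_right (k := (1:ℕ∞)) (by simp)).mp h2
    exact lt_of_lt_of_le (by norm_num) h4
  rcases Set.one_lt_encard_iff.mp hd with ⟨β, γ, hβ, hγ, hne⟩
  exact ⟨β, hβ.1, γ, hγ.1, hβ.2, hγ.2, hne⟩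

lemma encard_ge {Y W : Set V} (h : σ.IsPrimeOn Y) (hsub : Y ⊆ W) :
    3 ≤ W.encard := le_trans h.1 (Set.encard_mono hsub)

/-- reconstruct an `Att` from pointwise relations. -/
lemma att_of_rel {Y : Set V} {α z : V} (hα : α ∈ Y) (hz : z ∉ Y)
    (h : ∀ β ∈ Y, β ≠ α → σ.rel (α, β) (z, β) ∧ σ.rel (β, α) (β, z)) :
    σ.Att Y α z := by
  refine ⟨hz, ?_, ?_⟩
  · rintro p (rfl | rfl); exacts [Or.inl hα, Or.inr rfl]
  · rintro p hp q hq v ⟨hv, hvM⟩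
    have hvY : v ∈ Y := by
      rcases hv with hv | hv
      · exact hv
      · exact absurd (Or.inr hv) hvM
    have hvα : v ≠ α := fun h' => hvM (Or.inl h')
    have hvz : v ≠ z := fun h' => hz (h' ▸ hvY)
    have key := h v hvY hvα
    have hP : ∀ r ∈ ({α, z} : Set V), σ.rel (α, v) (r, v) ∧ σ.rel (v, α) (v, r) := by
      rintro r (rfl | rfl)
      · exact ⟨σ.refl _ (by simpa using hvα.symm), σ.refl _ (by simpa using hvα)⟩
      · exact ⟨(key.1), (key.2)⟩
    exact ⟨σ.trans (σ.symm (hP p hp).1) (hP q hq).1,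
      σ.trans (σ.symm (hP p hp).2) (hP q hq).2⟩

lemma hol_of_rel {Y : Set V} {z : V} (hz : z ∉ Y)
    (h : ∀ a ∈ Y, ∀ b ∈ Y, σ.rel (a, z) (b, z) ∧ σ.rel (z, a) (z, b)) :
    σ.Hol Y z := by
  refine ⟨hz, Set.subset_union_left, ?_⟩
  rintro p hp q hq v ⟨hv, hvM⟩
  have : v = z := by rcases hv with hv | hv; exacts [absurd hv hvM, hv]
  subst this
  exact h p hp q hq

lemma att_rel {Y : Set V} {α x : V} (h : σ.Att Y α x) {β : V} (hβ : β ∈ Y)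
    (hβα : β ≠ α) : σ.rel (α, β) (x, β) ∧ σ.rel (β, α) (β, x) := by
  refine h.2.2 α (Or.inl rfl) x (Or.inr rfl) β ⟨Or.inl hβ, ?_⟩
  rintro (rfl | rfl); exacts [hβα rfl, h.1 hβ]

lemma hol_rel {Y : Set V} {x : V} (h : σ.Hol Y x) {a b : V} (ha : a ∈ Y)
    (hb : b ∈ Y) : σ.rel (a, x) (b, x) ∧ σ.rel (x, a) (x, b) :=
  h.2.2 a ha b hb x ⟨Or.inr rfl, h.1⟩

lemma not_hol_dis {Y : Set V} {z : V} (hz : z ∉ Y) (h : ¬ σ.Hol Y z) :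
    ∃ a ∈ Y, ∃ b ∈ Y, σ.Dis z a b := by
  by_contra hc
  push_neg at hc
  refine h (hol_of_rel hz fun a ha b hb => ?_)
  have := hc a ha b hb
  have h1 := rel_of_not_dis this (fun h' => hz (h' ▸ ha)) (fun h' => hz (h' ▸ hb))
  exact h1

/-- disjointness: `Hol` and `Att` are incompatible. -/
lemma hol_att_disj {Y : Set V} (hY : σ.IsPrimeOn Y) {α x : V} (hα : α ∈ Y)
    (hH : σ.Hol Y x) (hA : σ.Att Y α x) : False := by
  rcases two_in_diff hY hα with ⟨β, hβ, γ, hγ, hβα, hγα, hβγ⟩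
  have hmod : σ.IsModuleOn Y (Y \ {α}) := by
    refine ⟨Set.diff_subset, ?_⟩
    rintro p ⟨hp, hpα⟩ q ⟨hq, hqα⟩ v ⟨hv, hvM⟩
    have hvα : v = α := by
      by_contra h'; exact hvM ⟨hv, h'⟩
    subst hvα
    have hpx := (att_rel hA hp (by simpa using hpα)).2
    have hqx := (att_rel hA hq (by simpa using hqα)).2
    have hH1 := hol_rel hH hp hq
    constructor
    · exact σ.trans hpx (σ.trans hH1.1 (σ.symm hqx))
    · have hpx' := (att_rel hA hp (by simpa using hpα)).1
      have hqx' := (att_rel hA hq (by simpa using hqα)).1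
      exact σ.trans hpx' (σ.trans hH1.2 (σ.symm hqx'))
  refine prime_not_module hY hmod ?_ ?_ ?_
  · intro h'; rw [Set.eq_empty_iff_forall_notMem] at h'; exact h' β ⟨hβ, by simpa using hβα⟩
  · intro h'; exact (h' ▸ (fun (h : α ∈ Y \ {α}) => h.2 rfl)) hα
  · intro v h'
    have h1 : β ∈ Y \ {α} := ⟨hβ, by simpa using hβα⟩
    have h2 : γ ∈ Y \ {α} := ⟨hγ, by simpa using hγα⟩
    rw [h'] at h1 h2
    exact hβγ (h1.trans h2.symm)

/-- disjointness: attachments to two different vertices are incompatible. -/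
lemma att_att_disj {Y : Set V} (hY : σ.IsPrimeOn Y) {α β x : V} (hα : α ∈ Y)
    (hβ : β ∈ Y) (hne : α ≠ β) (hA : σ.Att Y α x) (hB : σ.Att Y β x) : False := by
  have hmod : σ.IsModuleOn Y {α, β} := by
    refine ⟨?_, ?_⟩
    · rintro p (rfl | rfl); exacts [hα, hβ]
    · rintro p hp q hq v ⟨hv, hvM⟩
      have hvα : v ≠ α := fun h' => hvM (Or.inl h')
      have hvβ : v ≠ β := fun h' => hvM (Or.inr h')
      have h1 := att_rel hA hv hvα
      have h2 := att_rel hB hv hvβ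
      have hP : ∀ r ∈ ({α, β} : Set V), σ.rel (α, v) (r, v) ∧ σ.rel (v, α) (v, r) := by
        rintro r (rfl | rfl)
        · exact ⟨σ.refl _ (by simpa using hvα.symm), σ.refl _ (by simpa using hvα)⟩
        · exact ⟨σ.trans h1.1 (σ.symm h2.1), σ.trans h1.2 (σ.symm h2.2)⟩
      exact ⟨σ.trans (σ.symm (hP p hp).1) (hP q hq).1,
        σ.trans (σ.symm (hP p hp).2) (hP q hq).2⟩
  refine prime_not_module hY hmod ?_ ?_ ?_
  · intro h'; rw [Set.eq_empty_iff_forall_notMem] at h'; exact h' α (Or.inl rfl)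
  · intro h'
    have : (Y : Set V).encard = 2 := by rw [← h']; exact Set.encard_pair hne
    have h3 := hY.1
    rw [this] at h3; norm_num at h3
  · intro v h'
    have h1 : α ∈ ({v} : Set V) := h' ▸ Or.inl rfl
    have h2 : β ∈ ({v} : Set V) := h' ▸ Or.inr rfl
    exact hne ((Set.mem_singleton_iff.mp h1).trans (Set.mem_singleton_iff.mp h2).symm)

/-- the outside partition: prime extension, `Hol`, or `Att`. -/
lemma partition {Y : Set V} (hY : σ.IsPrimeOn Y) {x : V} (hx : x ∉ Y) :
    σ.IsPrimeOn (Y ∪ {x}) ∨ σ.Hol Y x ∨ ∃ α ∈ Y, σ.Att Y α x := by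
  by_cases hp : σ.IsPrimeOn (Y ∪ {x})
  · exact Or.inl hp
  right
  have hex : ∃ M, σ.IsModuleOn (Y ∪ {x}) M ∧
      ¬ (M = ∅ ∨ M = Y ∪ {x} ∨ ∃ v, M = {v}) := by
    by_contra hc
    push_neg at hc
    exact hp ⟨encard_ge hY Set.subset_union_left, fun M hM => hc M hM⟩
  rcases hex with ⟨M, hM, hMn⟩
  have h0 : M ≠ ∅ := fun h => hMn (Or.inl h)
  have hW : M ≠ Y ∪ {x} := fun h => hMn (Or.inr (Or.inl h))
  have h1 : ∀ v, M ≠ {v} := fun v h => hMn (Or.inr (Or.inr ⟨v, h⟩))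
  have hMY := mod_restrict hM (Set.subset_union_left (t := {x}))
  have hMsub : M ⊆ Y ∪ {x} := hM.1
  rcases hY.2 (M ∩ Y) hMY with he | he | ⟨u, he⟩
  · -- M ⊆ {x}
    exfalso
    have : M ⊆ {x} := by
      intro p hp
      rcases hMsub hp with h' | h'
      · exact absurd (Set.eq_empty_iff_forall_notMem.mp he p) (fun hc => hc ⟨hp, h'⟩)
      · exact h'
    rcases Set.subset_singleton_iff_eq.mp this with h' | h'
    exacts [h0 h', h1 x h']
  · -- Y ⊆ M
    have hYM : Y ⊆ M := fun p hp => by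
      have hmem : p ∈ M ∩ Y := by rw [he]; exact hp
      exact hmem.1
    by_cases hxM : x ∈ M
    · exfalso; apply hW
      apply Set.Subset.antisymm hMsub
      rintro p (hp | rfl); exacts [hYM hp, hxM]
    · left
      have hMeq : M = Y := by
        apply Set.Subset.antisymm _ hYM
        intro p hp
        rcases hMsub hp with h' | h'
        · exact h'
        · exact absurd (h' ▸ hp) (by simpa using hxM)
      exact ⟨hx, hMeq ▸ hM⟩
  · -- M ∩ Y = {u}
    right
    have humem : u ∈ M ∩ Y := by rw [he]; rfl
    have huM : u ∈ M := humem.1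
    have huY : u ∈ Y := humem.2
    have hxM : x ∈ M := by
      by_contra hxM
      have : M ⊆ {u} := by
        intro p hp
        rcases hMsub hp with h' | h'
        · have hmem : p ∈ M ∩ Y := ⟨hp, h'⟩
          rw [he] at hmem; exact hmem
        · exact absurd (h' ▸ hp) hxM
      rcases Set.subset_singleton_iff_eq.mp this with h' | h'
      exacts [h0 h', h1 u h']
    have hMeq : M = {u, x} := by
      apply Set.Subset.antisymm
      · intro p hp
        rcases hMsub hp with h' | h'
        · have hmem : p ∈ M ∩ Y := ⟨hp, h'⟩
          rw [he] at hmem; exact Or.inl hmem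
        · exact Or.inr h'
      · rintro p (rfl | rfl); exacts [huM, hxM]
    exact ⟨u, huY, hx, hMeq ▸ hM⟩

end TwoStructure
namespace TwoStructure
variable {σ : TwoStructure V}

/-- Key extension lemma for attached vertices: if `x` is attached to `α` over `Y`,
`y` distinguishes `{α,x}` and `y` is not attached to `α`, then `σ[Y∪{x,y}]` is prime. -/
lemma att_ext {Y : Set V} (hY : σ.IsPrimeOn Y) {α x y : V} (hα : α ∈ Y)
    (hx : σ.Att Y α x) (hyY : y ∉ Y) (hyx : y ≠ x) (hdis : σ.Dis y α x)
    (hyA : ¬ σ.Att Y α y) : σ.IsPrimeOn (Y ∪ {x, y}) := by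
  have hxY : x ∉ Y := hx.1
  set W := Y ∪ ({x, y} : Set V) with hW
  have hYW : Y ⊆ W := Set.subset_union_left
  have hxW : x ∈ W := Or.inr (Or.inl rfl)
  have hyW : y ∈ W := Or.inr (Or.inr rfl)
  have hUW : Y ∪ {x} ⊆ W := by
    rintro p (hp | rfl); exacts [hYW hp, hxW]
  have hUW' : Y ∪ {y} ⊆ W := by
    rintro p (hp | rfl); exacts [hYW hp, hyW]
  refine ⟨encard_ge hY hYW, ?_⟩
  intro M hM
  by_contra hc
  have h0 : M ≠ ∅ := fun h => hc (Or.inl h)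
  have hWne : M ≠ W := fun h => hc (Or.inr (Or.inl h))
  have h1 : ∀ v, M ≠ {v} := fun v h => hc (Or.inr (Or.inr ⟨v, h⟩))
  have hMY := mod_restrict hM hYW
  rcases hY.2 (M ∩ Y) hMY with he | he | ⟨u, he⟩
  · -- M ∩ Y = ∅ : M ⊆ {x,y}
    have hsub : M ⊆ {x, y} := by
      intro p hp
      rcases hM.1 hp with h' | h'
      · exact (Set.eq_empty_iff_forall_notMem.mp he p ⟨hp, h'⟩).elim
      · exact h'
    by_cases hxM : x ∈ M
    · by_cases hyM : y ∈ M
      · -- M = {x,y} : derive Att Y α y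
        refine hyA (att_of_rel hα hyY fun β hβ hβα => ?_)
        have hβM : β ∉ M := fun h' => by
          rcases hsub h' with h'' | h''
          exacts [hxY (h'' ▸ hβ), hyY (h'' ▸ hβ)]
        have hr := mod_rel hM hxM hyM (hYW hβ) hβM
        have hatt := att_rel hx hβ hβα
        exact ⟨σ.trans hatt.1 hr.1, σ.trans hatt.2 hr.2⟩
      · have : M ⊆ {x} := by
          intro p hp; rcases hsub hp with h' | h'
          exacts [h', absurd (h' ▸ hp) hyM]
        rcases Set.subset_singleton_iff_eq.mp this with h' | h'
        exacts [h0 h', h1 x h']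
    · have : M ⊆ {y} := by
        intro p hp; rcases hsub hp with h' | h'
        exacts [absurd (h' ▸ hp) hxM, h']
      rcases Set.subset_singleton_iff_eq.mp this with h' | h'
      exacts [h0 h', h1 y h']
  · -- M ∩ Y = Y
    have hYM : Y ⊆ M := fun p hp => by
      have hmem : p ∈ M ∩ Y := by rw [he]; exact hp
      exact hmem.1
    by_cases hxM : x ∈ M
    · by_cases hyM : y ∈ M
      · exact hWne (Set.Subset.antisymm hM.1 (by
          rintro p (hp | rfl | rfl); exacts [hYM hp, hxM, hyM]))
      · have hr := mod_rel hM (hYM hα) hxM hyW hyM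
        exact hdis.2.2 ⟨hr.1, hr.2⟩
    · -- x ∉ M : Y is a module of σ[Y∪{x}], contradicting Att
      have hres := mod_restrict hM hUW
      have heq : M ∩ (Y ∪ {x}) = Y := by
        apply Set.Subset.antisymm
        · rintro p ⟨hpM, hp | rfl⟩; exacts [hp, absurd hpM hxM]
        · exact fun p hp => ⟨hYM hp, Or.inl hp⟩
      rw [heq] at hres
      exact hol_att_disj hY hα ⟨hxY, hres⟩ hx
  · -- M ∩ Y = {u}
    have humem : u ∈ M ∩ Y := by rw [he]; rfl
    have huM : u ∈ M := humem.1
    have huY : u ∈ Y := humem.2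
    have hMYsub : ∀ p ∈ M, p ∈ Y → p = u := fun p hp hpY => by
      have : p ∈ M ∩ Y := ⟨hp, hpY⟩
      rw [he] at this; exact this
    by_cases hxM : x ∈ M
    · -- {u,x} module of σ[Y∪{x}] : u = α
      have hres := mod_restrict hM hUW
      have heq : M ∩ (Y ∪ {x}) = {u, x} := by
        apply Set.Subset.antisymm
        · rintro p ⟨hpM, hp | rfl⟩
          exacts [Or.inl (hMYsub p hpM hp), Or.inr rfl]
        · rintro p (rfl | rfl)
          exacts [⟨huM, Or.inl huY⟩, ⟨hxM, Or.inr rfl⟩]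
      rw [heq] at hres
      have huα : u = α := by
        by_contra hne
        exact att_att_disj hY hα huY (Ne.symm hne) hx ⟨hxY, hres⟩
      subst huα
      by_cases hyM : y ∈ M
      · -- Att Y u y, contradiction
        refine hyA (att_of_rel hα hyY fun β hβ hβα => ?_)
        have hβM : β ∉ M := fun h' => hβα (hMYsub β h' hβ)
        exact mod_rel hM huM hyM (hYW hβ) hβM
      · have hr := mod_rel hM huM hxM hyW hyM
        exact hdis.2.2 ⟨hr.1, hr.2⟩
    · by_cases hyM : y ∈ M
      · -- M = {u,y}
        by_cases huα : u = α
        · subst huα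
          have hres := mod_restrict hM hUW'
          have heq : M ∩ (Y ∪ {y}) = {u, y} := by
            apply Set.Subset.antisymm
            · rintro p ⟨hpM, hp | rfl⟩
              exacts [Or.inl (hMYsub p hpM hp), Or.inr rfl]
            · rintro p (rfl | rfl)
              exacts [⟨huM, Or.inl huY⟩, ⟨hyM, Or.inr rfl⟩]
          rw [heq] at hres
          exact hyA ⟨hyY, hres⟩
        · -- u ≠ α : contradict hdis
          have hαM : α ∉ M := fun h' => huα ((hMYsub α h' hα).symm)
          have hatt := att_rel hx huY (Ne.symm (fun h => huα h.symm))
          have h2 := mod_rel hM huM hyM (hYW hα) hαM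
          have h3 := mod_rel hM huM hyM hxW hxM
          refine hdis.2.2 ⟨?_, ?_⟩
          · exact σ.trans (σ.symm h2.2) (σ.trans hatt.1 h3.2)
          · exact σ.trans (σ.symm h2.1) (σ.trans hatt.2 h3.1)
      · have : M ⊆ {u} := by
          intro p hp
          rcases hM.1 hp with h' | h' | h'
          exacts [hMYsub p hp h', absurd (h' ▸ hp) hxM, absurd (h' ▸ hp) hyM]
        rcases Set.subset_singleton_iff_eq.mp this with h' | h'
        exacts [h0 h', h1 u h']

/-- Key extension lemma for `Hol` vertices. -/
lemma hol_ext {Y : Set V} (hY : σ.IsPrimeOn Y) {x y a b : V} (hx : σ.Hol Y x)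
    (hyY : y ∉ Y) (hyx : y ≠ x) (ha : a ∈ Y) (hb : b ∈ Y) (hdisy : σ.Dis y a b)
    (hdisx : ∃ c ∈ Y, σ.Dis x c y) : σ.IsPrimeOn (Y ∪ {x, y}) := by
  have hxY : x ∉ Y := hx.1
  set W := Y ∪ ({x, y} : Set V) with hW
  have hYW : Y ⊆ W := Set.subset_union_left
  have hxW : x ∈ W := Or.inr (Or.inl rfl)
  have hyW : y ∈ W := Or.inr (Or.inr rfl)
  have hUW : Y ∪ {x} ⊆ W := by
    rintro p (hp | rfl); exacts [hYW hp, hxW]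
  refine ⟨encard_ge hY hYW, ?_⟩
  intro M hM
  by_contra hc
  have h0 : M ≠ ∅ := fun h => hc (Or.inl h)
  have hWne : M ≠ W := fun h => hc (Or.inr (Or.inl h))
  have h1 : ∀ v, M ≠ {v} := fun v h => hc (Or.inr (Or.inr ⟨v, h⟩))
  have hMY := mod_restrict hM hYW
  rcases hY.2 (M ∩ Y) hMY with he | he | ⟨u, he⟩
  · -- M ⊆ {x,y}
    have hsub : M ⊆ {x, y} := by
      intro p hp
      rcases hM.1 hp with h' | h'
      · exact (Set.eq_empty_iff_forall_notMem.mp he p ⟨hp, h'⟩).elim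
      · exact h'
    by_cases hxM : x ∈ M
    · by_cases hyM : y ∈ M
      · have hnM : ∀ β ∈ Y, β ∉ M := fun β hβ h' => by
          rcases hsub h' with h'' | h''
          exacts [hxY (h'' ▸ hβ), hyY (h'' ▸ hβ)]
        have hma := mod_rel hM hxM hyM (hYW ha) (hnM a ha)
        have hmb := mod_rel hM hxM hyM (hYW hb) (hnM b hb)
        have hol := hol_rel hx ha hb
        refine hdisy.2.2 ⟨?_, ?_⟩
        · exact σ.trans (σ.symm hma.2) (σ.trans hol.1 hmb.2)
        · exact σ.trans (σ.symm hma.1) (σ.trans hol.2 hmb.1)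
      · have : M ⊆ {x} := by
          intro p hp; rcases hsub hp with h' | h'
          exacts [h', absurd (h' ▸ hp) hyM]
        rcases Set.subset_singleton_iff_eq.mp this with h' | h'
        exacts [h0 h', h1 x h']
    · have : M ⊆ {y} := by
        intro p hp; rcases hsub hp with h' | h'
        exacts [absurd (h' ▸ hp) hxM, h']
      rcases Set.subset_singleton_iff_eq.mp this with h' | h'
      exacts [h0 h', h1 y h']
  · -- Y ⊆ M
    have hYM : Y ⊆ M := fun p hp => by
      have hmem : p ∈ M ∩ Y := by rw [he]; exact hp
      exact hmem.1
    by_cases hyM : y ∈ M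
    · by_cases hxM : x ∈ M
      · exact hWne (Set.Subset.antisymm hM.1 (by
          rintro p (hp | rfl | rfl); exacts [hYM hp, hxM, hyM]))
      · rcases hdisx with ⟨c, hc', hdx⟩
        have hr := mod_rel hM (hYM hc') hyM hxW hxM
        exact hdx.2.2 ⟨hr.1, hr.2⟩
    · have hr := mod_rel hM (hYM ha) (hYM hb) hyW hyM
      exact hdisy.2.2 ⟨hr.1, hr.2⟩
  · -- M ∩ Y = {u}
    have humem : u ∈ M ∩ Y := by rw [he]; rfl
    have huM : u ∈ M := humem.1
    have huY : u ∈ Y := humem.2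
    have hMYsub : ∀ p ∈ M, p ∈ Y → p = u := fun p hp hpY => by
      have : p ∈ M ∩ Y := ⟨hp, hpY⟩
      rw [he] at this; exact this
    by_cases hxM : x ∈ M
    · have hres := mod_restrict hM hUW
      have heq : M ∩ (Y ∪ {x}) = {u, x} := by
        apply Set.Subset.antisymm
        · rintro p ⟨hpM, hp | rfl⟩
          exacts [Or.inl (hMYsub p hpM hp), Or.inr rfl]
        · rintro p (rfl | rfl)
          exacts [⟨huM, Or.inl huY⟩, ⟨hxM, Or.inr rfl⟩]
      rw [heq] at hres
      exact hol_att_disj hY huY hx ⟨hxY, hres⟩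
    · by_cases hyM : y ∈ M
      · rcases hdisx with ⟨c, hc', hdx⟩
        have hr := mod_rel hM huM hyM hxW hxM
        have hol := hol_rel hx hc' huY
        exact hdx.2.2 ⟨σ.trans hol.1 hr.1, σ.trans hol.2 hr.2⟩
      · have : M ⊆ {u} := by
          intro p hp
          rcases hM.1 hp with h' | h' | h'
          exacts [hMYsub p hp h', absurd (h' ▸ hp) hxM, absurd (h' ▸ hp) hyM]
        rcases Set.subset_singleton_iff_eq.mp this with h' | h'
        exacts [h0 h', h1 u h']

end TwoStructure
namespace TwoStructure

/-- vertices reachable from `x` by chains of distinguishers of pairs `{α,·}`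
through vertices attached to `α`. -/
inductive AttReach (σ : TwoStructure V) (Y : Set V) (α x : V) : V → Prop
  | base : AttReach σ Y α x x
  | step {w w' : V} : AttReach σ Y α x w → σ.Att Y α w → σ.Dis w' α w →
      AttReach σ Y α x w'

/-- vertices reachable from `x` by chains of distinguishers through `Hol` vertices. -/
inductive HolReach (σ : TwoStructure V) (Y : Set V) (x : V) : V → Prop
  | base : HolReach σ Y x x
  | step {w w' a : V} : HolReach σ Y x w → σ.Hol Y w → a ∈ Y → σ.Dis w a w' →
      HolReach σ Y x w'

variable {σ : TwoStructure V}

lemma att_reach_not_all {Y : Set V} (hσ : σ.IsPrimeOn Set.univ)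
    (hY : σ.IsPrimeOn Y) {α x : V} (hα : α ∈ Y) (hx : σ.Att Y α x) :
    ¬ ∀ w, AttReach σ Y α x w → σ.Att Y α w := by
  intro hall
  set A : Set V := insert α {w | AttReach σ Y α x w} with hA
  have key : ∀ v ∉ A, ∀ p ∈ A, σ.rel (α, v) (p, v) ∧ σ.rel (v, α) (v, p) := by
    intro v hv p hp
    have hvα : v ≠ α := fun h => hv (h ▸ Or.inl rfl)
    rcases hp with rfl | hp
    · exact ⟨σ.refl _ hvα.symm, σ.refl _ hvα⟩
    · have hnd : ¬ σ.Dis v α p := fun hd =>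
        hv (Or.inr (AttReach.step hp (hall p hp) hd))
      have hvp : v ≠ p := fun h => hv (Or.inr (h ▸ hp))
      have := rel_of_not_dis hnd hvα hvp
      exact ⟨σ.symm (σ.symm this.1), this.2⟩
  have hmod : σ.IsModuleOn Set.univ A := by
    refine ⟨Set.subset_univ _, ?_⟩
    rintro p hp q hq v ⟨-, hv⟩
    exact ⟨σ.trans (σ.symm (key v hv p hp).1) (key v hv q hq).1,
      σ.trans (σ.symm (key v hv p hp).2) (key v hv q hq).2⟩
  rcases two_in_diff hY hα with ⟨β, hβ, γ, hγ, hβα, hγα, hβγ⟩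
  have hnotin : ∀ δ ∈ Y, δ ≠ α → δ ∉ A := by
    rintro δ hδ hδα (h | h)
    · exact hδα h
    · exact (hall δ h).1 hδ
  refine prime_not_module hσ hmod ?_ ?_ ?_
  · intro h
    exact Set.eq_empty_iff_forall_notMem.mp h α (Or.inl rfl)
  · intro h
    exact hnotin β hβ hβα (h ▸ Set.mem_univ β)
  · intro v h
    have h1 : α ∈ ({v} : Set V) := h ▸ Or.inl rfl
    have h2 : x ∈ ({v} : Set V) := h ▸ Or.inr AttReach.base
    exact hx.1 ((Set.mem_singleton_iff.mp h2).trans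
      (Set.mem_singleton_iff.mp h1).symm ▸ hα)
  
lemma att_reach_chain {Y : Set V} {α x : V} {w : V}
    (h : AttReach σ Y α x w) :
    ∃ (n : ℕ) (y : ℕ → V), y 0 = x ∧ y n = w ∧ (∀ i < n, σ.Att Y α (y i)) ∧
      ∀ i < n, σ.Dis (y (i + 1)) α (y i) := by
  induction h with
  | base => exact ⟨0, fun _ => x, rfl, rfl, by omega, by omega⟩
  | @step w w' hr hAtt hdis ih =>
    obtain ⟨n, y, h0, hn, hA, hD⟩ := ih
    refine ⟨n + 1, fun i => if i ≤ n then y i else w', by simpa using h0,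
      by simp, ?_, ?_⟩
    · intro i hi
      by_cases hin : i ≤ n
      · simp only [if_pos hin]
        rcases lt_or_eq_of_le hin with h' | h'
        · exact hA i h'
        · exact h' ▸ hn ▸ hAtt
      · omega
    · intro i hi
      by_cases hin : i < n
      · simpa only [if_pos (by omega : i + 1 ≤ n), if_pos (by omega : i ≤ n)]
          using hD i hin
      · have hieq : i = n := by omega
        subst hieq
        simp only [if_neg (by omega : ¬ i + 1 ≤ i), if_pos le_rfl]
        exact hn ▸ hdis

lemma hol_reach_not_all {Y : Set V} (hσ : σ.IsPrimeOn Set.univ)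
    (hY : σ.IsPrimeOn Y) {x : V} (hx : σ.Hol Y x) :
    ¬ ∀ w, HolReach σ Y x w → σ.Hol Y w := by
  intro hall
  obtain ⟨a₀, b₀, ha₀, hb₀, hab⟩ := Set.one_lt_encard_iff.mp
    (lt_of_lt_of_le (by norm_num) hY.1)
  set C : Set V := {w | HolReach σ Y x w} with hC
  have hCY : ∀ v ∈ C, v ∉ Y := fun v hv => (hall v hv).1
  have key : ∀ v ∈ C, ∀ p ∈ Cᶜ, σ.rel (a₀, v) (p, v) ∧ σ.rel (v, a₀) (v, p) := by
    intro v hv p hp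
    have hva : v ≠ a₀ := fun h => hCY v hv (h ▸ ha₀)
    have hnd : ¬ σ.Dis v a₀ p := fun hd =>
      hp (HolReach.step hv (hall v hv) ha₀ hd)
    have hvp : v ≠ p := fun h => hp (h ▸ hv)
    exact rel_of_not_dis hnd hva hvp
  have hmod : σ.IsModuleOn Set.univ Cᶜ := by
    refine ⟨Set.subset_univ _, ?_⟩
    rintro p hp q hq v ⟨-, hv⟩
    have hvC : v ∈ C := not_not.mp hv
    exact ⟨σ.trans (σ.symm (key v hvC p hp).1) (key v hvC q hq).1,
      σ.trans (σ.symm (key v hvC p hp).2) (key v hvC q hq).2⟩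
  have hYC : ∀ δ ∈ Y, δ ∈ Cᶜ := fun δ hδ h => hCY δ h hδ
  refine prime_not_module hσ hmod ?_ ?_ ?_
  · intro h
    exact Set.eq_empty_iff_forall_notMem.mp h a₀ (hYC a₀ ha₀)
  · intro h
    have : x ∈ Cᶜ := h ▸ Set.mem_univ x
    exact this HolReach.base
  · intro v h
    have h1 : a₀ ∈ ({v} : Set V) := h ▸ hYC a₀ ha₀
    have h2 : b₀ ∈ ({v} : Set V) := h ▸ hYC b₀ hb₀
    exact hab ((Set.mem_singleton_iff.mp h1).trans (Set.mem_singleton_iff.mp h2).symm)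

lemma hol_reach_chain {Y : Set V} {x : V} {wf : V}
    (h : HolReach σ Y x wf) :
    ∃ (n : ℕ) (w : ℕ → V), w 0 = x ∧ w n = wf ∧ (∀ i < n, σ.Hol Y (w i)) ∧
      ∀ i < n, ∃ a ∈ Y, σ.Dis (w i) a (w (i + 1)) := by
  induction h with
  | base => exact ⟨0, fun _ => x, rfl, rfl, by omega, by omega⟩
  | @step v w' a hr hHol ha hdis ih =>
    obtain ⟨n, w, h0, hn, hH, hD⟩ := ih
    refine ⟨n + 1, fun i => if i ≤ n then w i else w', by simpa using h0,
      by simp, ?_, ?_⟩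
    · intro i hi
      by_cases hin : i ≤ n
      · simp only [if_pos hin]
        rcases lt_or_eq_of_le hin with h' | h'
        · exact hH i h'
        · exact h' ▸ hn ▸ hHol
      · omega
    · intro i hi
      by_cases hin : i < n
      · simpa only [if_pos (by omega : i + 1 ≤ n), if_pos (by omega : i ≤ n)]
          using hD i hin
      · have hieq : i = n := by omega
        subst hieq
        simp only [if_neg (by omega : ¬ i + 1 ≤ i), if_pos le_rfl]
        exact ⟨a, ha, hn ▸ hdis⟩

end TwoStructure
namespace TwoStructure
variable {σ : TwoStructure V}

/-- Main lemma for attached vertices: a chain of distinguishers exiting the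
attachment class yields a finite prime extension containing `x`. -/
lemma att_main : ∀ n : ℕ, ∀ (Y : Set V) (α x : V) (y : ℕ → V),
    σ.IsPrimeOn Y → α ∈ Y → σ.Att Y α x → y 0 = x →
    (∀ i < n, σ.Att Y α (y i)) → (∀ i < n, σ.Dis (y (i + 1)) α (y i)) →
    ¬ σ.Att Y α (y n) →
    ∃ F : Set V, F ⊆ Yᶜ ∧ F.Finite ∧ x ∈ F ∧ σ.IsPrimeOn (Y ∪ F) := by
  intro n
  induction n using Nat.strong_induction_on with
  | _ n IH =>
  intro Y α x y hY hα hx h0 hA hD hE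
  match n, hA, hD, hE with
  | 0, hA, hD, hE => rw [h0] at hE; exact absurd hx hE
  | (m + 1), hA, hD, hE =>
  have hDm := hD m (Nat.lt_succ_self m)
  have hAm := hA m (Nat.lt_succ_self m)
  have hynY : y (m + 1) ∉ Y := by
    intro hin
    have h' := att_rel hAm hin hDm.1
    exact hDm.2.2 ⟨h'.1, h'.2⟩
  have hE' : ¬ σ.Att Y α (y (m + 1)) := hE
  by_cases hnd : σ.Dis (y (m + 1)) α x
  · exact ⟨{x, y (m + 1)}, by rintro p (rfl | rfl); exacts [hx.1, hynY],
      (Set.finite_singleton _).insert _, Or.inl rfl,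
      att_ext hY hα hx hynY hnd.2.1 hnd hE'⟩
  · have hymx : y m ≠ x := fun h => hnd (h ▸ hDm)
    have hyy : y (m + 1) ≠ y m := hDm.2.1
    have hY' : σ.IsPrimeOn (Y ∪ {y m, y (m + 1)}) := att_ext hY hα hAm hynY hyy hDm hE'
    have hxy1 : x ≠ y (m + 1) := fun h => hE' (h ▸ hx)
    have hxY' : x ∉ Y ∪ {y m, y (m + 1)} := by
      rintro (h | h | h)
      exacts [hx.1 h, hymx h.symm, hxy1 h]
    have hαY' : α ∈ Y ∪ {y m, y (m + 1)} := Or.inl hα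
    have hsub : Y ∪ {x} ⊆ (Y ∪ {y m, y (m + 1)}) ∪ {x} := by
      rintro p (hp | rfl); exacts [Or.inl (Or.inl hp), Or.inr rfl]
    rcases partition hY' hxY' with hp | hH | ⟨γ, hγ, hattγ⟩
    · refine ⟨{x, y m, y (m + 1)}, ?_, ?_, Or.inl rfl, ?_⟩
      · rintro p (rfl | rfl | rfl); exacts [hx.1, hAm.1, hynY]
      · exact ((Set.finite_singleton _).insert _).insert _
      · have heq : Y ∪ {x, y m, y (m + 1)} = (Y ∪ {y m, y (m + 1)}) ∪ {x} := by
          ext p; simp only [Set.mem_union, Set.mem_insert_iff, Set.mem_singleton_iff]; tauto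
        rw [heq]; exact hp
    · exfalso
      have hres := mod_restrict hH.2 hsub
      have heq : (Y ∪ {y m, y (m + 1)}) ∩ (Y ∪ {x}) = Y := by
        apply Set.Subset.antisymm
        · rintro p ⟨hp1, hp2⟩
          rcases hp1 with hp1 | hp1
          · exact hp1
          · exfalso
            rcases hp2 with hp2 | rfl
            · rcases hp1 with rfl | rfl; exacts [hAm.1 hp2, hynY hp2]
            · rcases hp1 with h | h; exacts [hymx h.symm, hxy1 h]
        · exact fun p hp => ⟨Or.inl hp, Or.inl hp⟩
      rw [heq] at hres
      exact hol_att_disj hY hα ⟨hx.1, hres⟩ hx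
    · rcases hγ with hγY | hγm | hγn
      · -- γ ∈ Y : then γ = α and we recurse
        have hres := mod_restrict hattγ.2 hsub
        have heq : ({γ, x} : Set V) ∩ (Y ∪ {x}) = {γ, x} :=
          Set.inter_eq_left.mpr (by rintro p (rfl | rfl)
                                    exacts [Or.inl hγY, Or.inr rfl])
        rw [heq] at hres
        have hattx : σ.Att Y γ x := ⟨hx.1, hres⟩
        by_cases hγα : γ = α
        · subst hγα
          classical
          have hex : ∃ j, ¬ σ.Att (Y ∪ {y m, y (m + 1)}) γ (y j) :=
            ⟨m, fun h => h.1 (Or.inr (Or.inl rfl))⟩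
          have hj : ¬ σ.Att (Y ∪ {y m, y (m + 1)}) γ (y (Nat.find hex)) :=
            Nat.find_spec hex
          have hjle : Nat.find hex ≤ m :=
            Nat.find_min' hex (fun h => h.1 (Or.inr (Or.inl rfl)))
          have hjmin : ∀ i < Nat.find hex, σ.Att (Y ∪ {y m, y (m + 1)}) γ (y i) :=
            fun i hi => not_not.mp (Nat.find_min hex hi)
          have hj0 : 0 < Nat.find hex := by
            rcases Nat.eq_zero_or_pos (Nat.find hex) with h' | h'
            · exfalso; rw [h', h0] at hj; exact hj hattγ
            · exact h'
          obtain ⟨F', hF1, hF2, hF3, hF4⟩ :=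
            IH (Nat.find hex) (by omega) (Y ∪ {y m, y (m + 1)}) γ x y hY' hαY'
              hattγ h0 (fun i hi => hjmin i hi) (fun i hi => hD i (by omega)) hj
          refine ⟨F' ∪ {y m, y (m + 1)}, ?_,
            hF2.union ((Set.finite_singleton _).insert _), Or.inl hF3, ?_⟩
          · rintro p (hp | hp)
            · exact fun hpY => hF1 hp (Or.inl hpY)
            · rcases hp with rfl | rfl; exacts [hAm.1, hynY]
          · have heqU : Y ∪ (F' ∪ {y m, y (m + 1)}) = (Y ∪ {y m, y (m + 1)}) ∪ F' := by
              ext p; simp only [Set.mem_union, Set.mem_insert_iff, Set.mem_singleton_iff]; tauto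
            rw [heqU]; exact hF4
        · exact (att_att_disj hY hα hγY (fun h => hγα h.symm) hx hattx).elim
      · -- γ = y m : contradiction with ¬ Dis (y (m+1)) α x
        exfalso; apply hnd
        subst hγm
        have hmem1 : y (m + 1) ∈ (Y ∪ {y m, y (m + 1)}) ∪ {x} :=
          Or.inl (Or.inr (Or.inr rfl))
        have hnm : y (m + 1) ∉ ({y m, x} : Set V) := by
          rintro (h | h); exacts [hyy h, hxy1 h.symm]
        have hr := mod_rel hattγ.2 (Or.inl rfl) (Or.inr rfl) hmem1 hnm
        refine ⟨hDm.1, fun h => hxy1 h.symm, ?_⟩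
        rintro ⟨r1, r2⟩
        exact hDm.2.2 ⟨σ.trans r1 (σ.symm hr.1), σ.trans r2 (σ.symm hr.2)⟩
      · -- γ = y (m+1) : y (m+1) would be attached to α over Y
        exfalso; apply hE'
        subst hγn
        refine att_of_rel hα hynY fun β hβ hβα => ?_
        have hattx := att_rel hx hβ hβα
        have hβY' : β ∈ (Y ∪ {y m, y (m + 1)}) ∪ {x} := Or.inl (Or.inl hβ)
        have hβn : β ∉ ({y (m + 1), x} : Set V) := by
          rintro (h | h); exacts [hynY (h ▸ hβ), hx.1 (h ▸ hβ)]
        have hr := mod_rel hattγ.2 (Or.inl rfl) (Or.inr rfl) hβY' hβn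
        exact ⟨σ.trans hattx.1 (σ.symm hr.1), σ.trans hattx.2 (σ.symm hr.2)⟩

/-- Any vertex attached over a prime base admits a finite prime extension. -/
lemma att_case {Y : Set V} (hσ : σ.IsPrimeOn Set.univ) (hY : σ.IsPrimeOn Y)
    {α x : V} (hα : α ∈ Y) (hx : σ.Att Y α x) :
    ∃ F : Set V, F ⊆ Yᶜ ∧ F.Finite ∧ x ∈ F ∧ σ.IsPrimeOn (Y ∪ F) := by
  by_cases hall : ∀ w, AttReach σ Y α x w → σ.Att Y α w
  · exact (att_reach_not_all hσ hY hα hx hall).elim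
  · push_neg at hall
    obtain ⟨wf, hr, hna⟩ := hall
    obtain ⟨n, y, h0, hn, hA, hD⟩ := att_reach_chain hr
    exact att_main n Y α x y hY hα hx h0 hA hD (by rw [hn]; exact hna)

end TwoStructure
namespace TwoStructure
variable {σ : TwoStructure V}

/-- Main lemma for `Hol` vertices. -/
lemma hol_main : ∀ n : ℕ, ∀ (Y : Set V) (x : V) (w : ℕ → V),
    σ.IsPrimeOn Set.univ → σ.IsPrimeOn Y → σ.Hol Y x → w 0 = x →
    (∀ i < n, σ.Hol Y (w i)) → (∀ i < n, ∃ a ∈ Y, σ.Dis (w i) a (w (i + 1))) →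
    ¬ σ.Hol Y (w n) →
    ∃ F : Set V, F ⊆ Yᶜ ∧ F.Finite ∧ x ∈ F ∧ σ.IsPrimeOn (Y ∪ F) := by
  intro n
  induction n using Nat.strong_induction_on with
  | _ n IH =>
  intro Y x w hσ hY hx h0 hH hD hE
  match n, hH, hD, hE with
  | 0, hH, hD, hE => rw [h0] at hE; exact absurd hx hE
  | (m + 1), hH, hD, hE =>
  obtain ⟨a, ha, hdm⟩ := hD m (Nat.lt_succ_self m)
  have hHm := hH m (Nat.lt_succ_self m)
  have hwnY : w (m + 1) ∉ Y := fun hin => hdm.2.2 (hol_rel hHm ha hin)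
  have hE' : ¬ σ.Hol Y (w (m + 1)) := hE
  obtain ⟨p, hp, q, hq, hdn⟩ := not_hol_dis hwnY hE'
  have hwnx : w (m + 1) ≠ x := fun h => hE' (h ▸ hx)
  by_cases hgood : ∃ c ∈ Y, σ.Dis x c (w (m + 1))
  · exact ⟨{x, w (m + 1)}, by rintro r (rfl | rfl); exacts [hx.1, hwnY],
      (Set.finite_singleton _).insert _, Or.inl rfl,
      hol_ext hY hx hwnY hwnx hp hq hdn hgood⟩
  · have hwmx : w m ≠ x := fun h => hgood ⟨a, ha, h ▸ hdm⟩
    have hwn_wm : w (m + 1) ≠ w m := Ne.symm hdm.2.1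
    have hY' : σ.IsPrimeOn (Y ∪ {w m, w (m + 1)}) :=
      hol_ext hY hHm hwnY hwn_wm hp hq hdn ⟨a, ha, hdm⟩
    have hxY' : x ∉ Y ∪ {w m, w (m + 1)} := by
      rintro (h | h | h)
      exacts [hx.1 h, hwmx h.symm, hwnx h.symm]
    have hsub : Y ∪ {x} ⊆ (Y ∪ {w m, w (m + 1)}) ∪ {x} := by
      rintro r (hr | rfl); exacts [Or.inl (Or.inl hr), Or.inr rfl]
    rcases partition hY' hxY' with hpr | hH' | ⟨γ, hγ, hattγ⟩
    · refine ⟨{x, w m, w (m + 1)}, ?_, ?_, Or.inl rfl, ?_⟩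
      · rintro r (rfl | rfl | rfl); exacts [hx.1, hHm.1, hwnY]
      · exact ((Set.finite_singleton _).insert _).insert _
      · have heq : Y ∪ {x, w m, w (m + 1)} = (Y ∪ {w m, w (m + 1)}) ∪ {x} := by
          ext r; simp only [Set.mem_union, Set.mem_insert_iff, Set.mem_singleton_iff]
          tauto
        rw [heq]; exact hpr
    · -- x ∈ Hol Y' : recurse along the chain
      classical
      have hex : ∃ j, ¬ σ.Hol (Y ∪ {w m, w (m + 1)}) (w j) :=
        ⟨m, fun h => h.1 (Or.inr (Or.inl rfl))⟩
      have hj : ¬ σ.Hol (Y ∪ {w m, w (m + 1)}) (w (Nat.find hex)) :=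
        Nat.find_spec hex
      have hjle : Nat.find hex ≤ m :=
        Nat.find_min' hex (fun h => h.1 (Or.inr (Or.inl rfl)))
      have hjmin : ∀ i < Nat.find hex, σ.Hol (Y ∪ {w m, w (m + 1)}) (w i) :=
        fun i hi => not_not.mp (Nat.find_min hex hi)
      have hj0 : 0 < Nat.find hex := by
        rcases Nat.eq_zero_or_pos (Nat.find hex) with h' | h'
        · exfalso; rw [h', h0] at hj; exact hj hH'
        · exact h'
      obtain ⟨F', hF1, hF2, hF3, hF4⟩ :=
        IH (Nat.find hex) (by omega) (Y ∪ {w m, w (m + 1)}) x w hσ hY' hH' h0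
          (fun i hi => hjmin i hi)
          (fun i hi => by
            obtain ⟨c, hc, hd⟩ := hD i (by omega)
            exact ⟨c, Or.inl hc, hd⟩) hj
      refine ⟨F' ∪ {w m, w (m + 1)}, ?_,
        hF2.union ((Set.finite_singleton _).insert _), Or.inl hF3, ?_⟩
      · rintro r (hr | hr)
        · exact fun hrY => hF1 hr (Or.inl hrY)
        · rcases hr with rfl | rfl; exacts [hHm.1, hwnY]
      · have heqU : Y ∪ (F' ∪ {w m, w (m + 1)}) = (Y ∪ {w m, w (m + 1)}) ∪ F' := by
          ext r; simp only [Set.mem_union, Set.mem_insert_iff, Set.mem_singleton_iff]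
          tauto
        rw [heqU]; exact hF4
    · -- x attached to some γ over Y'
      rcases hγ with hγY | hγ'
      · -- γ ∈ Y : contradiction with Hol Y x
        exfalso
        have hres := mod_restrict hattγ.2 hsub
        have heq : ({γ, x} : Set V) ∩ (Y ∪ {x}) = {γ, x} :=
          Set.inter_eq_left.mpr (by rintro r (rfl | rfl)
                                    exacts [Or.inl hγY, Or.inr rfl])
        rw [heq] at hres
        exact hol_att_disj hY hγY hx ⟨hx.1, hres⟩
      · -- γ is one of the two new vertices : attached machinery over Y'
        obtain ⟨F', hF1, hF2, hF3, hF4⟩ :=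
          att_case hσ hY' (Or.inr hγ') hattγ
        refine ⟨F' ∪ {w m, w (m + 1)}, ?_,
          hF2.union ((Set.finite_singleton _).insert _), Or.inl hF3, ?_⟩
        · rintro r (hr | hr)
          · exact fun hrY => hF1 hr (Or.inl hrY)
          · rcases hr with rfl | rfl; exacts [hHm.1, hwnY]
        · have heqU : Y ∪ (F' ∪ {w m, w (m + 1)}) = (Y ∪ {w m, w (m + 1)}) ∪ F' := by
            ext r; simp only [Set.mem_union, Set.mem_insert_iff, Set.mem_singleton_iff]
            tauto
          rw [heqU]; exact hF4

/-- Any `Hol` vertex over a prime base admits a finite prime extension. -/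
lemma hol_case {Y : Set V} (hσ : σ.IsPrimeOn Set.univ) (hY : σ.IsPrimeOn Y)
    {x : V} (hx : σ.Hol Y x) :
    ∃ F : Set V, F ⊆ Yᶜ ∧ F.Finite ∧ x ∈ F ∧ σ.IsPrimeOn (Y ∪ F) := by
  by_cases hall : ∀ v, HolReach σ Y x v → σ.Hol Y v
  · exact (hol_reach_not_all hσ hY hx hall).elim
  · push_neg at hall
    obtain ⟨wf, hr, hna⟩ := hall
    obtain ⟨n, w, h0, hn, hH, hD⟩ := hol_reach_chain hr
    exact hol_main n Y x w hσ hY hx h0 hH hD (by rw [hn]; exact hna)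

end TwoStructure

/-- Every vertex outside a prime substructure belongs to a finite prime
extension. -/
theorem statement3 (σ : TwoStructure V) (X : Set V) (hX : X ⊂ Set.univ)
    (hσ : σ.IsPrimeOn Set.univ) (hXp : σ.IsPrimeOn X) :
    ∀ x ∈ Xᶜ, ∃ F : Set V, F ⊆ Xᶜ ∧ F.Finite ∧ x ∈ F ∧
      σ.IsPrimeOn (X ∪ F) := by
  intro x hx
  rcases TwoStructure.partition hXp hx with hp | hH | ⟨α, hα, hatt⟩
  · exact ⟨{x}, by rintro r rfl; exact hx, Set.finite_singleton _, rfl, hp⟩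
  · exact TwoStructure.hol_case hσ hXp hH
  · exact TwoStructure.att_case hσ hXp hα hatt
end

section
/- Let σ be a 2-structure and let X ⊊ V(σ) be such that σ[X] is prime. (1) If M is a module of σ with X ⊆ M, then every element of V(σ)∖M is an isolated vertex of the outside graph Γ_{(σ,X̄)}. (2) If α ∈ X and M is a module of σ with M ∩ X = {α}, then every element of M∖{α} is an isolated vertex of Γ_{(σ,X̄)}. -/
/-!
Formalization of 2-structures (Ehrenfeucht et al.), modules, primality,
criticality, the outside partition/graph, and (discrete) half graphs.
-/

universe u

variable {V : Type u}

/-- Lemma 2.2: modules of `σ` containing `X`, or meeting `X` in a single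
vertex, produce isolated vertices of the outside graph. -/
theorem statement12 (σ : TwoStructure V) (X : Set V) (hX : X ⊂ Set.univ)
    (hXp : σ.IsPrimeOn X) :
    (∀ M : Set V, σ.IsModuleOn Set.univ M → X ⊆ M →
      ∀ v ∈ Mᶜ, ∀ w : V, ¬ (σ.outsideGraph X).Adj v w) ∧
    (∀ α ∈ X, ∀ M : Set V, σ.IsModuleOn Set.univ M → M ∩ X = {α} →
      ∀ v ∈ M \ {α}, ∀ w : V, ¬ (σ.outsideGraph X).Adj v w) := by
  obtain ⟨h3X, -⟩ := hXp
  have restrict : ∀ (M W : Set V), σ.IsModuleOn Set.univ M → σ.IsModuleOn W (M ∩ W) := by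
    rintro M W ⟨-, h⟩
    refine ⟨Set.inter_subset_right, ?_⟩
    rintro x ⟨hxM, -⟩ y ⟨hyM, -⟩ v ⟨hvW, hv⟩
    exact h x hxM y hyM v ⟨trivial, fun hvM => hv ⟨hvM, hvW⟩⟩
  have hXne : X.Nonempty := by
    rw [Set.nonempty_iff_ne_empty]
    rintro rfl
    simp at h3X
  have hXsing : ∀ u : V, ¬ X ⊆ {u} := by
    intro u hsub
    have := le_trans h3X (Set.encard_mono hsub)
    simp [Set.encard_singleton] at this
  constructor
  · rintro M hM hXM v hv w ⟨hvX, hwX, hvw, hprime⟩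
    have hN := restrict M (X ∪ {v, w}) hM
    have hvW : v ∈ X ∪ {v, w} := Or.inr (Or.inl rfl)
    have hXN : X ⊆ M ∩ (X ∪ {v, w}) := fun x hx => ⟨hXM hx, Or.inl hx⟩
    rcases hprime.2 (M ∩ (X ∪ {v, w})) hN with h | h | ⟨u, h⟩
    · obtain ⟨x, hx⟩ := hXne
      have := hXN hx; rw [h] at this; exact this
    · have : v ∈ M ∩ (X ∪ {v, w}) := by rw [h]; exact hvW
      exact hv this.1
    · exact hXsing u (fun x hx => h ▸ hXN hx)
  · rintro α hα M hM hMX v ⟨hvM, hvα⟩ w ⟨hvX, hwX, hvw, hprime⟩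
    have hN := restrict M (X ∪ {v, w}) hM
    have hαN : α ∈ M ∩ (X ∪ {v, w}) := by
      have : α ∈ M ∩ X := hMX ▸ rfl
      exact ⟨this.1, Or.inl this.2⟩
    have hvN : v ∈ M ∩ (X ∪ {v, w}) := ⟨hvM, Or.inr (Or.inl rfl)⟩
    rcases hprime.2 (M ∩ (X ∪ {v, w})) hN with h | h | ⟨u, h⟩
    · rw [h] at hαN; exact hαN
    · have hsub : X ⊆ {α} := by
        intro x hx
        have : x ∈ M ∩ (X ∪ {v, w}) := by rw [h]; exact Or.inl hx
        have : x ∈ M ∩ X := ⟨this.1, hx⟩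
        exact hMX ▸ this
      exact hXsing α hsub
    · rw [h] at hαN hvN
      exact hvα (hvN.trans hαN.symm)
end

section
/- Let σ be a 2-structure and let X ⊊ V(σ) be such that σ[X] is prime. Suppose Statement (S1) holds, i.e. Ext_σ(X) = ∅. Let M ⊆ X̄. If M is a module of σ, then M is a module of the outside graph Γ_{(σ,X̄)}, and there exist a block B_p of p_{(σ,X̄)} and a block B_q of q_{(σ,X̄)} such that M ⊆ B_q ⊆ B_p and M is a module of σ[B_p]. -/
/-!
Formalization of 2-structures (Ehrenfeucht et al.), modules, primality,
criticality, the outside partition/graph, and (discrete) half graphs.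
-/

universe u

variable {V : Type u}

section Aux
open scoped Classical

private lemma pair_split (X : Set V) (v w : V) : X ∪ {v, w} = (X ∪ {v}) ∪ {w} := by
  rw [Set.insert_eq, ← Set.union_assoc]

private lemma swap_image_union {x y : V} {W : Set V} (hxW : x ∉ W) (hyW : y ∉ W) :
    Equiv.swap x y '' (W ∪ {x}) = W ∪ {y} := by
  rw [Set.image_union, Set.image_singleton, Equiv.swap_apply_left]
  congr 1
  have h : ∀ w ∈ W, Equiv.swap x y w = id w := fun w hw =>
    Equiv.swap_apply_of_ne_of_ne (fun h => hxW (h ▸ hw)) (fun h => hyW (h ▸ hw))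
  rw [Set.image_congr h, Set.image_id]

private lemma rel_congr_swap (σ : TwoStructure V) {M : Set V}
    (hmod : σ.IsModuleOn Set.univ M) {x y : V} (hx : x ∈ M) (hy : y ∈ M)
    {W : Set V} (hxW : x ∉ W) (hyW : y ∉ W) (hWM : ∀ w ∈ W, w ∉ M) :
    ∀ a ∈ W ∪ {y}, ∀ b ∈ W ∪ {y}, a ≠ b →
      σ.rel (a, b) (Equiv.swap x y a, Equiv.swap x y b) := by
  intro a ha b hb hab
  have fix : ∀ w ∈ W, Equiv.swap x y w = w := fun w hw =>
    Equiv.swap_apply_of_ne_of_ne (fun h => hxW (h ▸ hw)) (fun h => hyW (h ▸ hw))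
  rcases ha with ha | ha
  · rcases hb with hb | hb
    · rw [fix a ha, fix b hb]; exact σ.refl _ hab
    · rw [Set.mem_singleton_iff] at hb
      rw [hb, fix a ha, Equiv.swap_apply_right]
      exact σ.symm (hmod.2 x hx y hy a ⟨Set.mem_univ a, hWM a ha⟩).2
  · rw [Set.mem_singleton_iff] at ha
    rcases hb with hb | hb
    · rw [ha, fix b hb, Equiv.swap_apply_right]
      exact σ.symm (hmod.2 x hx y hy b ⟨Set.mem_univ b, hWM b hb⟩).1
    · rw [Set.mem_singleton_iff] at hb; exact absurd (ha.trans hb.symm) hab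

private lemma module_swap (σ : TwoStructure V) {M : Set V}
    (hmod : σ.IsModuleOn Set.univ M) {x y : V} (hx : x ∈ M) (hy : y ∈ M)
    {W : Set V} (hxW : x ∉ W) (hyW : y ∉ W) (hWM : ∀ w ∈ W, w ∉ M)
    {N : Set V} (hN : σ.IsModuleOn (W ∪ {y}) N) :
    σ.IsModuleOn (W ∪ {x}) (Equiv.swap x y '' N) := by
  have himg : Equiv.swap x y '' (W ∪ {y}) = W ∪ {x} := by
    rw [Equiv.swap_comm]; exact swap_image_union hyW hxW
  have key := rel_congr_swap σ hmod hx hy hxW hyW hWM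
  constructor
  · rw [← himg]; exact Set.image_mono hN.1
  · rintro a' ⟨a, haN, rfl⟩ b' ⟨b, hbN, rfl⟩ c' ⟨hc'W, hc'N⟩
    obtain ⟨c, rfl⟩ : ∃ c, Equiv.swap x y c = c' :=
      ⟨Equiv.swap x y c', Equiv.swap_apply_self _ _ _⟩
    have hcW : c ∈ W ∪ {y} := by
      rw [← himg] at hc'W
      obtain ⟨c₀, hc₀, hc₀e⟩ := hc'W
      rwa [(Equiv.swap x y).injective hc₀e] at hc₀
    have hcN : c ∉ N := fun h => hc'N ⟨c, h, rfl⟩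
    have haW := hN.1 haN
    have hbW := hN.1 hbN
    have hac : a ≠ c := fun h => hcN (h ▸ haN)
    have hbc : b ≠ c := fun h => hcN (h ▸ hbN)
    have hm := hN.2 a haN b hbN c ⟨hcW, hcN⟩
    have t1 := key a haW c hcW hac
    have t2 := key b hbW c hcW hbc
    have t3 := key c hcW a haW (Ne.symm hac)
    have t4 := key c hcW b hbW (Ne.symm hbc)
    exact ⟨σ.trans (σ.symm t1) (σ.trans hm.1 t2),
           σ.trans (σ.symm t3) (σ.trans hm.2 t4)⟩

private lemma prime_swap (σ : TwoStructure V) {M : Set V}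
    (hmod : σ.IsModuleOn Set.univ M) {x y : V} (hx : x ∈ M) (hy : y ∈ M)
    {W : Set V} (hxW : x ∉ W) (hyW : y ∉ W) (hWM : ∀ w ∈ W, w ∉ M)
    (hp : σ.IsPrimeOn (W ∪ {x})) : σ.IsPrimeOn (W ∪ {y}) := by
  have himg : Equiv.swap x y '' (W ∪ {x}) = W ∪ {y} := swap_image_union hxW hyW
  constructor
  · calc (3 : ℕ∞) ≤ (W ∪ {x}).encard := hp.1
      _ = (Equiv.swap x y '' (W ∪ {x})).encard :=
          ((Equiv.swap x y).injective.encard_image _).symm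
      _ = (W ∪ {y}).encard := by rw [himg]
  · intro N hN
    have hN' := module_swap σ hmod hx hy hxW hyW hWM hN
    have hback : (Equiv.swap x y) '' ((Equiv.swap x y) '' N) = N := by
      rw [Set.image_image]; simp [Equiv.swap_apply_self]
    rcases hp.2 _ hN' with h0 | hall | ⟨w, hw⟩
    · left; rw [← hback, h0, Set.image_empty]
    · right; left; rw [← hback, hall, himg]
    · right; right
      exact ⟨Equiv.swap x y w, by rw [← hback, hw, Set.image_singleton]⟩

private lemma outside_trichotomy (σ : TwoStructure V) {X : Set V}
    (hXp : σ.IsPrimeOn X) {v : V} (hv : v ∉ X)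
    (hnp : ¬ σ.IsPrimeOn (X ∪ {v})) :
    σ.IsModuleOn (X ∪ {v}) X ∨ ∃ α ∈ X, σ.IsModuleOn (X ∪ {v}) ({α, v} : Set V) := by
  by_contra h
  push_neg at h
  obtain ⟨h1, h2⟩ := h
  apply hnp
  constructor
  · exact le_trans hXp.1 (Set.encard_mono Set.subset_union_left)
  · intro N hN
    have hNX : σ.IsModuleOn X (N ∩ X) := by
      refine ⟨Set.inter_subset_right, fun a ha b hb c hc => ?_⟩
      exact hN.2 a ha.1 b hb.1 c ⟨Or.inl hc.1, fun hcN => hc.2 ⟨hcN, hc.1⟩⟩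
    rcases hXp.2 _ hNX with h0 | hXall | ⟨α, hα⟩
    · have hsub : N ⊆ {v} := by
        intro z hz
        rcases hN.1 hz with hzX | hzv
        · exact absurd (show z ∈ N ∩ X from ⟨hz, hzX⟩) (by rw [h0]; exact Set.notMem_empty z)
        · exact hzv
      rcases Set.subset_singleton_iff_eq.mp hsub with h | h
      · exact Or.inl h
      · exact Or.inr (Or.inr ⟨v, h⟩)
    · have hXN : X ⊆ N := fun a ha => by
        have : a ∈ N ∩ X := hXall.symm ▸ ha
        exact this.1
      by_cases hvN : v ∈ N
      · right; left
        exact Set.Subset.antisymm hN.1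
          (Set.union_subset hXN (Set.singleton_subset_iff.mpr hvN))
      · exfalso
        apply h1
        have hNX' : N = X := by
          apply Set.Subset.antisymm
          · intro z hz
            rcases hN.1 hz with hzX | hzv
            · exact hzX
            · exact absurd (hzv ▸ hz) hvN
          · exact hXN
        exact hNX' ▸ hN
    · have hmem : α ∈ N ∩ X := by rw [hα]; exact Set.mem_singleton α
      have hαX : α ∈ X := hmem.2
      have hαN : α ∈ N := hmem.1
      by_cases hvN : v ∈ N
      · exfalso
        apply h2 α hαX
        have : N = {α, v} := by
          apply Set.Subset.antisymm
          · intro z hz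
            rcases hN.1 hz with hzX | hzv
            · have : z ∈ N ∩ X := ⟨hz, hzX⟩
              rw [hα] at this
              exact Or.inl this
            · exact Or.inr hzv
          · rintro z (rfl | rfl)
            · exact hαN
            · exact hvN
        exact this ▸ hN
      · right; right
        refine ⟨α, Set.Subset.antisymm ?_ (Set.singleton_subset_iff.mpr hαN)⟩
        intro z hz
        rcases hN.1 hz with hzX | hzv
        · have : z ∈ N ∩ X := ⟨hz, hzX⟩
          rw [hα] at this
          exact this
        · exact absurd (hzv ▸ hz) hvN

end Aux

/-- Lemma 2.5: under Statement (S1) (`Ext_σ(X) = ∅`), a module `M ⊆ X̄` of `σ`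
is a module of the outside graph and sits inside a block `B_q ⊆ B_p` of the
refined/outside partitions, being a module of `σ[B_p]`. -/
theorem statement13 (σ : TwoStructure V) (X : Set V) (hX : X ⊂ Set.univ)
    (hXp : σ.IsPrimeOn X) (hS1 : σ.extSet X = ∅)
    (M : Set V) (hM : M ⊆ Xᶜ) (hmod : σ.IsModuleOn Set.univ M) :
    GraphIsModuleOn (σ.outsideGraph X) Xᶜ M ∧
      ∃ Bp ∈ σ.pBlocks X, ∃ Bq ∈ σ.qBlocks X,
        M ⊆ Bq ∧ Bq ⊆ Bp ∧ σ.IsModuleOn Bp M := by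
  classical
  have hXM : ∀ w ∈ X, w ∉ M := fun w hw hwM => (hM hwM) hw
  -- transfer of adjacency across elements of the module M
  have hadj_transfer : ∀ v ∈ Xᶜ \ M, ∀ x ∈ M, ∀ y ∈ M,
      (σ.outsideGraph X).Adj v x → (σ.outsideGraph X).Adj v y := by
    intro v hv x hxM y hyM hA
    obtain ⟨hvX, hxX, hvx, hp⟩ := hA
    refine ⟨hvX, fun hyX => (hM hyM) hyX, fun h => hv.2 (h ▸ hyM), ?_⟩
    rw [pair_split] at hp ⊢
    refine prime_swap σ hmod hxM hyM ?_ ?_ ?_ hp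
    · rintro (h | h)
      · exact hxX h
      · exact hvx (Set.mem_singleton_iff.mp h).symm
    · rintro (h | h)
      · exact (hM hyM) h
      · exact hv.2 ((Set.mem_singleton_iff.mp h) ▸ hyM)
    · rintro w (h | h)
      · exact hXM w h
      · exact (Set.mem_singleton_iff.mp h) ▸ hv.2
  have graphmod : GraphIsModuleOn (σ.outsideGraph X) Xᶜ M := by
    refine ⟨hM, fun v hv => ?_⟩
    by_cases hMne : M.Nonempty
    · obtain ⟨x₀, hx₀⟩ := hMne
      by_cases hadj : (σ.outsideGraph X).Adj v x₀
      · exact Or.inl (fun z hz => hadj_transfer v hv x₀ hx₀ z hz hadj)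
      · exact Or.inr (fun z hz hA => hadj (hadj_transfer v hv z hz x₀ hx₀ hA))
    · exact Or.inr (fun z hz _ => hMne ⟨z, hz⟩)
  refine ⟨graphmod, ?_⟩
  by_cases hMne : M.Nonempty
  swap
  · rw [Set.not_nonempty_iff_eq_empty] at hMne
    subst hMne
    refine ⟨σ.extSet X, Set.mem_union_left _ (Set.mem_insert _ _),
      σ.extSet X, Set.mem_union_left _ (Set.mem_union_left _ (Set.mem_singleton _)),
      Set.empty_subset _, subset_rfl,
      Set.empty_subset _, fun x hx => absurd hx (Set.notMem_empty x)⟩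
  obtain ⟨x₀, hx₀⟩ := hMne
  have hx₀X : x₀ ∉ X := hM hx₀
  have hnotext : ¬ σ.IsPrimeOn (X ∪ {x₀}) := by
    intro hp
    have hmem : x₀ ∈ σ.extSet X := ⟨hx₀X, hp⟩
    rw [hS1] at hmem
    exact hmem
  have hXne : X.Nonempty := by
    rw [← Set.encard_pos]
    exact lt_of_lt_of_le (by norm_num) hXp.1
  rcases outside_trichotomy σ hXp hx₀X hnotext with hinn | ⟨α, hαX, hatt⟩
  · -- x₀ ∈ ⟨X⟩_σ
    obtain ⟨α₀, hα₀⟩ := hXne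
    have hMq : M ⊆ σ.innSetC X (x₀, α₀) (α₀, x₀) := by
      intro z hz
      have hzX : z ∉ X := hM hz
      have hmodz : ∀ a ∈ X, σ.rel (x₀, a) (z, a) ∧ σ.rel (a, x₀) (a, z) :=
        fun a ha => hmod.2 x₀ hx₀ z hz a ⟨Set.mem_univ a, hXM a ha⟩
      have hinnp : ∀ a ∈ X, ∀ b ∈ X, σ.rel (a, x₀) (b, x₀) ∧ σ.rel (x₀, a) (x₀, b) :=
        fun a ha b hb => hinn.2 a ha b hb x₀ ⟨Set.mem_union_right _ rfl, hx₀X⟩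
      refine ⟨⟨hzX, Set.subset_union_left, fun a ha b hb c hc => ?_⟩, fun a ha => ?_⟩
      · have hcz : c = z := by
          rcases hc.1 with h | h
          · exact absurd h hc.2
          · exact h
        subst hcz
        exact ⟨σ.trans (σ.symm (hmodz a ha).2)
                 (σ.trans (hinnp a ha b hb).1 (hmodz b hb).2),
               σ.trans (σ.symm (hmodz a ha).1)
                 (σ.trans (hinnp a ha b hb).2 (hmodz b hb).1)⟩
      · exact ⟨σ.trans (σ.symm (hmodz a ha).1) (hinnp a ha α₀ hα₀).2,
               σ.trans (σ.symm (hmodz a ha).2) (hinnp a ha α₀ hα₀).1⟩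
    refine ⟨σ.innSet X, Set.mem_union_left _ (Set.mem_insert_of_mem _ rfl),
      σ.innSetC X (x₀, α₀) (α₀, x₀),
      Set.mem_union_left _ (Set.mem_union_right _ ⟨(x₀, α₀), (α₀, x₀), rfl⟩),
      hMq, fun z hz => hz.1, ?_⟩
    exact ⟨fun z hz => (hMq hz).1,
      fun a ha b hb v hv => hmod.2 a ha b hb v ⟨Set.mem_univ v, hv.2⟩⟩
  · -- x₀ ∈ X_σ(α)
    have hMq : M ⊆ σ.attSetC X α (x₀, α) (α, x₀) := by
      intro z hz
      have hzX : z ∉ X := hM hz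
      have hmodα := hmod.2 x₀ hx₀ z hz α ⟨Set.mem_univ α, hXM α hαX⟩
      refine ⟨⟨hzX, ?_, fun a ha b hb c hc => ?_⟩, σ.symm hmodα.1, σ.symm hmodα.2⟩
      · rintro w (rfl | rfl)
        · exact Set.mem_union_left _ hαX
        · exact Set.mem_union_right _ rfl
      · have hcX : c ∈ X := by
          rcases hc.1 with h | h
          · exact h
          · exact absurd (Or.inr h) hc.2
        have hcα : c ≠ α := fun h => hc.2 (Or.inl h)
        have hcz : c ≠ z := fun h => hc.2 (Or.inr h)
        have hcx₀ : c ≠ x₀ := fun h => hx₀X (h ▸ hcX)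
        have hk := hatt.2 α (Or.inl rfl) x₀ (Or.inr rfl) c
          ⟨Set.mem_union_left _ hcX, by rintro (h | h); exacts [hcα h, hcx₀ h]⟩
        have hmz := hmod.2 x₀ hx₀ z hz c ⟨Set.mem_univ c, hXM c hcX⟩
        have key1 : σ.rel (α, c) (z, c) := σ.trans hk.1 hmz.1
        have key2 : σ.rel (c, α) (c, z) := σ.trans hk.2 hmz.2
        obtain rfl | rfl := ha <;> obtain rfl | rfl := hb
        · exact ⟨σ.refl _ (Ne.symm hcα), σ.refl _ hcα⟩
        · exact ⟨key1, key2⟩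
        · exact ⟨σ.symm key1, σ.symm key2⟩
        · exact ⟨σ.refl _ (Ne.symm hcz), σ.refl _ hcz⟩
    refine ⟨σ.attSet X α, Set.mem_union_right _ ⟨α, hαX, rfl⟩,
      σ.attSetC X α (x₀, α) (α, x₀),
      Set.mem_union_right _ ⟨α, hαX, (x₀, α), (α, x₀), rfl⟩,
      hMq, fun z hz => hz.1, ?_⟩
    exact ⟨fun z hz => (hMq hz).1,
      fun a ha b hb v hv => hmod.2 a ha b hb v ⟨Set.mem_univ v, hv.2⟩⟩
end

section
/- Let σ be a 2-structure and let X ⊊ V(σ) be such that σ[X] is prime. Suppose Statement (S5) holds, i.e. no 5-element subset Y of X̄ satisfies σ[X∪Y] prime. Then no connected component C of the outside graph Γ_{(σ,X̄)} contains an induced subgraph isomorphic to the path P5 on 5 vertices. -/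
/-!
Formalization of 2-structures (Ehrenfeucht et al.), modules, primality,
criticality, the outside partition/graph, and (discrete) half graphs.
-/

universe u

variable {V : Type u}

namespace TwoStructure

lemma isModuleOn_inter (σ : TwoStructure V) {W M : Set V} (hM : σ.IsModuleOn W M)
    (W' : Set V) (hW' : W' ⊆ W) : σ.IsModuleOn W' (M ∩ W') := by
  refine ⟨Set.inter_subset_right, ?_⟩
  rintro x ⟨hxM, _⟩ y ⟨hyM, _⟩ v ⟨hvW', hv⟩
  exact hM.2 x hxM y hyM v ⟨hW' hvW', fun h => hv ⟨h, hvW'⟩⟩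

lemma not_prime (σ : TwoStructure V) {W N : Set V} (hN : σ.IsModuleOn W N)
    {x y z : V} (hx : x ∈ N) (hy : y ∈ N) (hxy : x ≠ y) (hzW : z ∈ W) (hz : z ∉ N) :
    ¬ σ.IsPrimeOn W := by
  rintro ⟨-, hmod⟩
  rcases hmod N hN with h | h | ⟨v, h⟩
  · rw [h] at hx; exact hx
  · rw [h] at hz; exact hz hzW
  · rw [h] at hx hy
    exact hxy (hx.trans hy.symm)

lemma prime_transfer (σ : TwoStructure V) {W M S : Set V} {v v' : V}
    (hM : σ.IsModuleOn W M) (hv : v ∈ M) (hv' : v' ∈ M)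
    (hS : S ⊆ W) (hSM : ∀ z ∈ S, z ∉ M) (hvS : v ∉ S) (hv'S : v' ∉ S)
    (hcard : 3 ≤ S.encard)
    (hp : σ.IsPrimeOn (S ∪ {v})) : σ.IsPrimeOn (S ∪ {v'}) := by
  by_cases hvv : v = v'
  · rwa [hvv] at hp
  constructor
  · exact le_trans hcard (Set.encard_mono Set.subset_union_left)
  intro N hN
  by_cases hv'N : v' ∈ N
  · -- v' ∈ N : replace v' by v
    have hvN : v ∉ N := by
      intro h
      rcases hN.1 h with h' | h'
      · exact hvS h'
      · exact hvv h'
    have hmod : σ.IsModuleOn (S ∪ {v}) (insert v (N \ {v'})) := by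
      constructor
      · rintro x (rfl | ⟨hxN, hxv'⟩)
        · exact Or.inr rfl
        · rcases hN.1 hxN with h | h
          · exact Or.inl h
          · exact absurd h hxv'
      · intro x hx y hy z hz
        obtain ⟨hzSv, hzN₀⟩ := hz
        have hzS : z ∈ S := by
          rcases hzSv with h | h
          · exact h
          · exact absurd (by rw [h]; exact Set.mem_insert v _) hzN₀
        have hzM : z ∉ M := hSM z hzS
        have hzW : z ∈ W := hS hzS
        have hzN : z ∉ N := by
          intro h
          by_cases hzv' : z = v'
          · exact hv'S (hzv' ▸ hzS)
          · exact hzN₀ (Or.inr ⟨h, hzv'⟩)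
        have key : ∀ x, x ∈ insert v (N \ {v'}) →
            ∃ x'' ∈ N, σ.rel (x, z) (x'', z) ∧ σ.rel (z, x) (z, x'') := by
          rintro x (rfl | ⟨hxN, hxv'⟩)
          · exact ⟨v', hv'N, (hM.2 x hv v' hv' z ⟨hzW, hzM⟩).1,
              (hM.2 x hv v' hv' z ⟨hzW, hzM⟩).2⟩
          · have hxz : x ≠ z := fun h => hzN₀ (h ▸ Or.inr ⟨hxN, hxv'⟩)
            exact ⟨x, hxN, σ.refl (x, z) hxz, σ.refl (z, x) (Ne.symm hxz)⟩
        obtain ⟨x'', hx''N, hx1, hx2⟩ := key x hx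
        obtain ⟨y'', hy''N, hy1, hy2⟩ := key y hy
        have hrel := hN.2 x'' hx''N y'' hy''N z ⟨Or.inl hzS, hzN⟩
        exact ⟨σ.trans (σ.trans hx1 hrel.1) (σ.symm hy1),
          σ.trans (σ.trans hx2 hrel.2) (σ.symm hy2)⟩
    rcases hp.2 _ hmod with h | h | ⟨u, h⟩
    · exact absurd (h ▸ Set.mem_insert v _) (Set.notMem_empty v)
    · right; left
      apply Set.Subset.antisymm hN.1
      rintro z (hzS | hzv')
      · have hz₀ : z ∈ insert v (N \ {v'}) := by rw [h]; exact Or.inl hzS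
        rcases hz₀ with rfl | ⟨hzN, -⟩
        · exact absurd hzS hvS
        · exact hzN
      · rwa [show z = v' from hzv']
    · have huv : v = u := by
        have : v ∈ ({u} : Set V) := h ▸ Set.mem_insert v _
        exact this
      subst huv
      right; right
      refine ⟨v', Set.Subset.antisymm ?_ (by rintro z rfl; exact hv'N)⟩
      intro z hzN
      by_cases hzv' : z = v'
      · exact hzv'
      · have : z ∈ insert v (N \ {v'}) := Or.inr ⟨hzN, hzv'⟩
        rw [h] at this
        exact absurd (this ▸ hzN) hvN
  · -- v' ∉ N : N ⊆ S
    have hNS : N ⊆ S := by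
      intro x hx
      rcases hN.1 hx with h | h
      · exact h
      · exact absurd (h ▸ hx) hv'N
    have hmod : σ.IsModuleOn (S ∪ {v}) N := by
      refine ⟨fun x hx => Or.inl (hNS hx), ?_⟩
      intro x hx y hy z hz
      obtain ⟨hzSv, hzN⟩ := hz
      rcases hzSv with hzS | hzv
      · exact hN.2 x hx y hy z ⟨Or.inl hzS, hzN⟩
      · have hzv : z = v := hzv
        subst hzv
        have hMx := hM.2 z hv v' hv' x ⟨hS (hNS hx), hSM x (hNS hx)⟩
        have hMy := hM.2 z hv v' hv' y ⟨hS (hNS hy), hSM y (hNS hy)⟩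
        have hNxy := hN.2 x hx y hy v' ⟨Or.inr rfl, hv'N⟩
        exact ⟨σ.trans (σ.trans hMx.2 hNxy.1) (σ.symm hMy.2),
          σ.trans (σ.trans hMx.1 hNxy.2) (σ.symm hMy.1)⟩
    rcases hp.2 N hmod with h | h | h
    · exact Or.inl h
    · exact absurd (hNS (h.symm ▸ Set.mem_union_right S rfl)) hvS
    · exact Or.inr (Or.inr h)

end TwoStructure

/-- Lemma 4.3: under Statement (S5), no component of the outside graph contains
an induced `P₅`. -/
theorem statement17 (σ : TwoStructure V) (X : Set V) (hX : X ⊂ Set.univ)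
    (hXp : σ.IsPrimeOn X)
    (hS5 : ∀ Y : Set V, Y ⊆ Xᶜ → Y.encard = 5 → ¬ σ.IsPrimeOn (X ∪ Y)) :
    ∀ C : Set V, σ.IsComponent X C →
      ¬ HasInducedP5On (σ.outsideGraph X) C := by
  rintro C - ⟨a, b, c, d, e, -, -, -, -, -, hab, hac, had, hae, hbc, hbd, hbe,
    hcd, hce, hde, Aab, Abc, Acd, Ade, Nac, Nad, Nae, Nbd, Nbe, Nce⟩
  obtain ⟨haX, hbX, -, Pab⟩ := Aab
  obtain ⟨-, hcX, -, Pbc⟩ := Abc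
  obtain ⟨-, hdX, -, Pcd⟩ := Acd
  obtain ⟨-, heX, -, Pde⟩ := Ade
  have Pba : σ.IsPrimeOn (X ∪ {b, a}) := by rwa [Set.pair_comm]
  have Pcb : σ.IsPrimeOn (X ∪ {c, b}) := by rwa [Set.pair_comm]
  have Pdc : σ.IsPrimeOn (X ∪ {d, c}) := by rwa [Set.pair_comm]
  have Ped : σ.IsPrimeOn (X ∪ {e, d}) := by rwa [Set.pair_comm]
  set Y : Set V := {a, b, c, d, e} with hY
  have haY : a ∈ Y := by simp [hY]
  have hbY : b ∈ Y := by simp [hY]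
  have hcY : c ∈ Y := by simp [hY]
  have hdY : d ∈ Y := by simp [hY]
  have heY : e ∈ Y := by simp [hY]
  obtain ⟨x1, x2, hx1, hx2, hx12⟩ : ∃ x1 x2, x1 ∈ X ∧ x2 ∈ X ∧ x1 ≠ x2 :=
    Set.one_lt_encard_iff.mp (lt_of_lt_of_le (by norm_num) hXp.1)
  have hYsub : Y ⊆ Xᶜ := by
    intro z hz
    rcases hz with rfl | rfl | rfl | rfl | rfl <;> assumption
  have hYcard : Y.encard = 5 := by
    rw [hY, Set.encard_insert_of_notMem (by simp [hab, hac, had, hae]),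
      Set.encard_insert_of_notMem (by simp [hbc, hbd, hbe]),
      Set.encard_insert_of_notMem (by simp [hcd, hce]),
      Set.encard_insert_of_notMem (by simp [hde]), Set.encard_singleton]
    rfl
  refine hS5 Y hYsub hYcard ⟨le_trans hXp.1 (Set.encard_mono Set.subset_union_left), ?_⟩
  intro M hMmod
  have hrestr := σ.isModuleOn_inter hMmod X Set.subset_union_left
  rcases hXp.2 (M ∩ X) hrestr with hMX | hMX | ⟨α, hMX⟩
  · -- M ∩ X = ∅
    have hMnX : ∀ p ∈ M, p ∉ X := fun p hp hpX =>
      Set.eq_empty_iff_forall_notMem.mp hMX p ⟨hp, hpX⟩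
    have hMY : ∀ p ∈ M, p ∈ Y := fun p hp => (hMmod.1 hp).resolve_left (hMnX p hp)
    have hedge : ∀ p q, p ∈ M → q ∈ M → p ≠ q → ¬ σ.IsPrimeOn (X ∪ {p, q}) := by
      intro p q hp hq hpq
      have hsub : X ∪ {p, q} ⊆ X ∪ Y := Set.union_subset_union_right X
        (by rintro z (rfl | rfl); exacts [hMY _ hp, hMY _ hq])
      exact σ.not_prime (σ.isModuleOn_inter hMmod _ hsub)
        ⟨hp, Or.inr (Set.mem_insert _ _)⟩ ⟨hq, Or.inr (by simp)⟩ hpq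
        (Or.inl hx1) (fun h => hMnX x1 h.1 hx1)
    have htr : ∀ p q w, p ∈ M → q ∈ M → w ∈ Y → w ∉ M →
        σ.IsPrimeOn (X ∪ {p, w}) → σ.IsPrimeOn (X ∪ {q, w}) := by
      intro p q w hp hq hwY hwM hP
      have h1 : ∀ u : V, X ∪ {u, w} = (X ∪ {w}) ∪ {u} := by
        intro u
        rw [Set.union_singleton, Set.union_insert]
      rw [h1] at hP
      rw [h1]
      refine σ.prime_transfer hMmod hp hq (Set.union_subset_union_right X (by
        rintro z rfl; exact hwY)) ?_ ?_ ?_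
        (le_trans hXp.1 (Set.encard_mono Set.subset_union_left)) hP
      · rintro z (hz | rfl)
        · exact fun h => hMnX z h hz
        · exact hwM
      · rintro (h | h)
        · exact hMnX p hp h
        · rw [show p = w from h] at hp; exact hwM hp
      · rintro (h | h)
        · exact hMnX q hq h
        · rw [show q = w from h] at hq; exact hwM hq
    have hss : ∀ p ∈ M, ∀ q ∈ M, p = q := by
      intro p hp q hq
      by_contra hpq
      have hpY := hMY p hp
      have hqY := hMY q hq
      simp only [hY, Set.mem_insert_iff, Set.mem_singleton_iff] at hpY hqY
      rcases hpY with h1 | h1 | h1 | h1 | h1 <;> rw [h1] at hp hpq <;>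
        [skip; skip; skip; skip; skip] <;>
        (rcases hqY with h2 | h2 | h2 | h2 | h2 <;> rw [h2] at hq hpq)
      · exact hpq rfl
      · exact hedge a b hp hq hpq Pab
      · -- {a,c}, w = d
        have hdM : d ∉ M := fun h => hedge c d hq h hcd Pcd
        exact Nad ⟨haX, hdX, had, htr c a d hq hp hdY hdM Pcd⟩
      · -- {a,d}, w = e
        have heM : e ∉ M := fun h => hedge d e hq h hde Pde
        exact Nae ⟨haX, heX, hae, htr d a e hq hp heY heM Pde⟩
      · -- {a,e}, w = b
        have hbM : b ∉ M := fun h => hedge a b hp h hab Pab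
        have := htr a e b hp hq hbY hbM Pab
        rw [Set.pair_comm] at this
        exact Nbe ⟨hbX, heX, hbe, this⟩
      · exact hedge b a hp hq hpq Pba
      · exact hpq rfl
      · exact hedge b c hp hq hpq Pbc
      · -- {b,d}, w = a
        have haM : a ∉ M := fun h => hedge a b h hp hab Pab
        have := htr b d a hp hq haY haM Pba
        rw [Set.pair_comm] at this
        exact Nad ⟨haX, hdX, had, this⟩
      · -- {b,e}, w = a
        have haM : a ∉ M := fun h => hedge a b h hp hab Pab
        have := htr b e a hp hq haY haM Pba
        rw [Set.pair_comm] at this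
        exact Nae ⟨haX, heX, hae, this⟩
      · -- {c,a}, w = d
        have hdM : d ∉ M := fun h => hedge c d hp h hcd Pcd
        exact Nad ⟨haX, hdX, had, htr c a d hp hq hdY hdM Pcd⟩
      · exact hedge b c hq hp (Ne.symm hpq) Pbc
      · exact hpq rfl
      · exact hedge c d hp hq hpq Pcd
      · -- {c,e}, w = b
        have hbM : b ∉ M := fun h => hedge b c h hp hbc Pbc
        have := htr c e b hp hq hbY hbM Pcb
        rw [Set.pair_comm] at this
        exact Nbe ⟨hbX, heX, hbe, this⟩
      · -- {d,a}, w = e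
        have heM : e ∉ M := fun h => hedge d e hp h hde Pde
        exact Nae ⟨haX, heX, hae, htr d a e hp hq heY heM Pde⟩
      · -- {d,b}, w = a
        have haM : a ∉ M := fun h => hedge a b h hq hab Pab
        have := htr b d a hq hp haY haM Pba
        rw [Set.pair_comm] at this
        exact Nad ⟨haX, hdX, had, this⟩
      · exact hedge c d hq hp (Ne.symm hpq) Pcd
      · exact hpq rfl
      · exact hedge d e hp hq hpq Pde
      · -- {e,a}, w = b
        have hbM : b ∉ M := fun h => hedge a b hq h hab Pab
        have := htr a e b hq hp hbY hbM Pab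
        rw [Set.pair_comm] at this
        exact Nbe ⟨hbX, heX, hbe, this⟩
      · -- {e,b}, w = a
        have haM : a ∉ M := fun h => hedge a b h hq hab Pab
        have := htr b e a hq hp haY haM Pba
        rw [Set.pair_comm] at this
        exact Nae ⟨haX, heX, hae, this⟩
      · -- {e,c}, w = b
        have hbM : b ∉ M := fun h => hedge b c h hq hbc Pbc
        have := htr c e b hq hp hbY hbM Pcb
        rw [Set.pair_comm] at this
        exact Nbe ⟨hbX, heX, hbe, this⟩
      · exact hedge d e hq hp (Ne.symm hpq) Pde
      · exact hpq rfl
    rcases Set.eq_empty_or_nonempty M with h | ⟨m, hm⟩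
    · exact Or.inl h
    · exact Or.inr (Or.inr ⟨m, Set.eq_singleton_iff_unique_mem.mpr
        ⟨hm, fun q hq => hss q hq m hm⟩⟩)
  · -- M ∩ X = X
    have hXM : X ⊆ M := fun z hz => (hMX.symm ▸ hz : z ∈ M ∩ X).1
    have hin : ∀ p q, p ∈ Y → q ∈ Y → σ.IsPrimeOn (X ∪ {p, q}) → p ∈ M := by
      intro p q hpY hqY hP
      by_contra hpM
      have hsub : X ∪ {p, q} ⊆ X ∪ Y := Set.union_subset_union_right X
        (by rintro z (rfl | rfl); exacts [hpY, hqY])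
      exact σ.not_prime (σ.isModuleOn_inter hMmod _ hsub)
        ⟨hXM hx1, Or.inl hx1⟩ ⟨hXM hx2, Or.inl hx2⟩ hx12
        (Or.inr (Set.mem_insert _ _)) (fun h => hpM h.1) hP
    have haM := hin a b haY hbY Pab
    have hbM := hin b a hbY haY Pba
    have hcM := hin c b hcY hbY Pcb
    have hdM := hin d c hdY hcY Pdc
    have heM := hin e d heY hdY Ped
    right; left
    apply Set.Subset.antisymm hMmod.1
    rintro z (hz | hz)
    · exact hXM hz
    · simp only [hY, Set.mem_insert_iff, Set.mem_singleton_iff] at hz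
      rcases hz with h | h | h | h | h <;> rw [h] <;> assumption
  · -- M ∩ X = {α}
    have hαM : α ∈ M := (show α ∈ M ∩ X by rw [hMX]; rfl).1
    have hαX : α ∈ X := (show α ∈ M ∩ X by rw [hMX]; rfl).2
    obtain ⟨β, hβX, hβα⟩ : ∃ β ∈ X, β ≠ α := by
      by_cases h : x1 = α
      · exact ⟨x2, hx2, fun hh => hx12 (h ▸ hh ▸ rfl)⟩
      · exact ⟨x1, hx1, h⟩
    have hatt : ∀ v w, v ∈ M → v ≠ α → v ∈ Y → w ∈ Y → ¬ σ.IsPrimeOn (X ∪ {v, w}) := by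
      intro v w hv hvα hvY hwY
      have hsub : X ∪ {v, w} ⊆ X ∪ Y := Set.union_subset_union_right X
        (by rintro z (rfl | rfl); exacts [hvY, hwY])
      refine σ.not_prime (σ.isModuleOn_inter hMmod _ hsub)
        ⟨hαM, Or.inl hαX⟩ ⟨hv, Or.inr (Set.mem_insert _ _)⟩ (fun h => hvα h.symm)
        (Or.inl hβX) ?_
      intro h
      have : β ∈ M ∩ X := ⟨h.1, hβX⟩
      rw [hMX] at this
      exact hβα this
    by_cases hsub : ∀ m ∈ M, m = α
    · exact Or.inr (Or.inr ⟨α, Set.eq_singleton_iff_unique_mem.mpr ⟨hαM, hsub⟩⟩)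
    · push_neg at hsub
      obtain ⟨v, hvM, hvα⟩ := hsub
      have hvY : v ∈ Y := by
        rcases hMmod.1 hvM with h | h
        · refine absurd (show v ∈ M ∩ X from ⟨hvM, h⟩) ?_
          rw [hMX]
          exact hvα
        · exact h
      exfalso
      simp only [hY, Set.mem_insert_iff, Set.mem_singleton_iff] at hvY
      rcases hvY with h | h | h | h | h <;> rw [h] at hvM hvα
      · exact hatt a b hvM hvα haY hbY Pab
      · exact hatt b c hvM hvα hbY hcY Pbc
      · exact hatt c d hvM hvα hcY hdY Pcd
      · exact hatt d e hvM hvα hdY heY Pde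
      · exact hatt e d hvM hvα heY hdY Ped
end
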